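/- arXiv:1403.3909 — 14 statements merged into one kernel-verified Lean document; each statement's English description precedes it below -/
import Mathlib

section
/- Let J be a nonempty finite set of indices with maximum element m. Then the conditional expectation of Ŝ(J) given ℱ_{m−1} equals Ŝ(J \ {m}) almost surely. -/
open MeasureTheory Finset

theorem stmt2 {Ω : Type*} {m0 : MeasurableSpace Ω} {μ : Measure Ω}
    [IsProbabilityMeasure μ] (ℱ : Filtration ℕ m0)
    (c : ℝ) (hc0 : 0 < c) (hc1 : c ≤ 1)
    (H p : ℕ → Ω → ℝ)
    (hHmeas : ∀ i, 1 ≤ i → Measurable[ℱ i] (H i))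
    (hH01 : ∀ i, 1 ≤ i → ∀ ω, H i ω = 0 ∨ H i ω = 1)
    (hpmeas : ∀ i, 1 ≤ i → Measurable[ℱ (i - 1)] (p i))
    (hpb : ∀ i, 1 ≤ i → ∀ᵐ ω ∂μ, c ≤ p i ω ∧ p i ω ≤ 1)
    (hcond : ∀ i, 1 ≤ i → μ[H i | ℱ (i - 1)] =ᵐ[μ] p i)
    (J : Finset ℕ) (hJne : J.Nonempty) (hJ1 : ∀ i ∈ J, 1 ≤ i) :
    μ[fun ω => ∏ i ∈ J, H i ω / p i ω | ℱ (J.max' hJne - 1)]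
      =ᵐ[μ] fun ω => ∏ i ∈ J.erase (J.max' hJne), H i ω / p i ω := by
  set m := J.max' hJne with hm
  have hmJ : m ∈ J := J.max'_mem hJne
  have hm1 : 1 ≤ m := hJ1 m hmJ
  set g : Ω → ℝ := fun ω => ∏ i ∈ J.erase m, H i ω / p i ω with hg
  -- measurability wrt ℱ (m-1)
  have hmeas_fac : ∀ i ∈ J.erase m, Measurable[ℱ (m - 1)] (fun ω => H i ω / p i ω) := by
    intro i hi
    have hiJ := Finset.mem_of_mem_erase hi
    have hi1 := hJ1 i hiJ
    have hilt : i < m := lt_of_le_of_ne (J.le_max' i hiJ) (Finset.ne_of_mem_erase hi)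
    have hile : i ≤ m - 1 := Nat.le_sub_one_of_lt hilt
    exact ((hHmeas i hi1).mono (ℱ.mono hile) le_rfl).div
      ((hpmeas i hi1).mono (ℱ.mono (le_trans (Nat.sub_le i 1) hile)) le_rfl)
  have hmeas_g : Measurable[ℱ (m - 1)] g :=
    Finset.measurable_prod _ hmeas_fac
  have hmeas_pm : Measurable[ℱ (m - 1)] (p m) := hpmeas m hm1
  have hmeas_f : StronglyMeasurable[ℱ (m - 1)] (fun ω => g ω / p m ω) :=
    (hmeas_g.div hmeas_pm).stronglyMeasurable
  -- global measurability
  have hmeasμ : ∀ i ∈ J, Measurable (fun ω => H i ω / p i ω) := by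
    intro i hi
    have hi1 := hJ1 i hi
    exact ((hHmeas i hi1).mono (ℱ.le i) le_rfl).div
      ((hpmeas i hi1).mono (ℱ.le (i - 1)) le_rfl)
  have hmeasH : Measurable (H m) := (hHmeas m hm1).mono (ℱ.le m) le_rfl
  -- a.e. bound of each factor
  have hbd : ∀ i ∈ J, ∀ᵐ ω ∂μ, |H i ω / p i ω| ≤ c⁻¹ := by
    intro i hi
    have hi1 := hJ1 i hi
    filter_upwards [hpb i hi1] with ω hp
    have hp0 : 0 < p i ω := lt_of_lt_of_le hc0 hp.1
    rcases hH01 i hi1 ω with h | h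
    · simp [h, le_of_lt (inv_pos.2 hc0)]
    · rw [h, abs_div, abs_one, abs_of_pos hp0]
      rw [div_le_iff₀ hp0, inv_mul_eq_div, le_div_iff₀ hc0, one_mul]
      exact hp.1
  have hbd_prod : ∀ (S : Finset ℕ), S ⊆ J → ∀ᵐ ω ∂μ,
      |∏ i ∈ S, H i ω / p i ω| ≤ c⁻¹ ^ S.card := by
    intro S hS
    have : ∀ᵐ ω ∂μ, ∀ i ∈ S, |H i ω / p i ω| ≤ c⁻¹ := by
      rw [Filter.eventually_all_finset]
      intro i hi; exact hbd i (hS hi)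
    filter_upwards [this] with ω hω
    rw [Finset.abs_prod]
    calc ∏ i ∈ S, |H i ω / p i ω| ≤ ∏ _i ∈ S, c⁻¹ :=
          Finset.prod_le_prod (fun i _ => abs_nonneg _) hω
      _ = c⁻¹ ^ S.card := by rw [Finset.prod_const]
  -- integrability of H m and (g / p m) * H m
  have hintH : Integrable (H m) μ := by
    refine ⟨hmeasH.aestronglyMeasurable, HasFiniteIntegral.of_bounded (C := 1) ?_⟩
    filter_upwards with ω
    rcases hH01 m hm1 ω with h | h <;> simp [h]
  have hint1 : Integrable (fun ω => (g ω / p m ω) * H m ω) μ := by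
    refine ⟨((hmeas_g.div hmeas_pm).mono (ℱ.le (m - 1)) le_rfl).mul hmeasH
      |>.aestronglyMeasurable, HasFiniteIntegral.of_bounded
      (C := c⁻¹ ^ (J.erase m).card * c⁻¹ * 1) ?_⟩
    filter_upwards [hbd_prod (J.erase m) (J.erase_subset m), hpb m hm1] with ω h1 h2
    have hp0 : 0 < p m ω := lt_of_lt_of_le hc0 h2.1
    have hH1 : |H m ω| ≤ 1 := by rcases hH01 m hm1 ω with h | h <;> simp [h]
    have hpinv : |(p m ω)⁻¹| ≤ c⁻¹ := by
      rw [abs_of_pos (inv_pos.2 hp0)]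
      exact inv_anti₀ hc0 h2.1
    calc ‖g ω / p m ω * H m ω‖ = |g ω| * |(p m ω)⁻¹| * |H m ω| := by
          rw [Real.norm_eq_abs, div_eq_mul_inv, abs_mul, abs_mul]
      _ ≤ c⁻¹ ^ (J.erase m).card * c⁻¹ * 1 :=
          mul_le_mul (mul_le_mul h1 hpinv (abs_nonneg _) (by positivity))
            hH1 (abs_nonneg _) (by positivity)
  -- rewrite LHS
  have hEq : (fun ω => ∏ i ∈ J, H i ω / p i ω)
      = fun ω => (g ω / p m ω) * H m ω := by
    funext ω
    rw [← Finset.prod_erase_mul J _ hmJ]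
    simp only [hg]
    ring
  rw [hEq]
  have key := condExp_mul_of_stronglyMeasurable_left hmeas_f hint1 hintH
  refine key.trans ?_
  filter_upwards [hcond m hm1, hpb m hm1] with ω hcw hpw
  have hp0 : p m ω ≠ 0 := ne_of_gt (lt_of_lt_of_le hc0 hpw.1)
  simp only [Pi.mul_apply]
  rw [hcw, div_mul_cancel₀ _ hp0]
end

section
/- For every finite set J of indices, the expectation of the product selection estimator satisfies E[Ŝ(J)] = 1. -/
open MeasureTheory Finset

theorem stmt3 {Ω : Type*} {m0 : MeasurableSpace Ω} {μ : Measure Ω}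
    [IsProbabilityMeasure μ] (ℱ : Filtration ℕ m0)
    (c : ℝ) (hc0 : 0 < c) (hc1 : c ≤ 1)
    (H p : ℕ → Ω → ℝ)
    (hHmeas : ∀ i, 1 ≤ i → Measurable[ℱ i] (H i))
    (hH01 : ∀ i, 1 ≤ i → ∀ ω, H i ω = 0 ∨ H i ω = 1)
    (hpmeas : ∀ i, 1 ≤ i → Measurable[ℱ (i - 1)] (p i))
    (hpb : ∀ i, 1 ≤ i → ∀ᵐ ω ∂μ, c ≤ p i ω ∧ p i ω ≤ 1)
    (hcond : ∀ i, 1 ≤ i → μ[H i | ℱ (i - 1)] =ᵐ[μ] p i)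
    (J : Finset ℕ) (hJ1 : ∀ i ∈ J, 1 ≤ i) :
    ∫ ω, ∏ i ∈ J, H i ω / p i ω ∂μ = 1 := by
  induction J using Finset.strongInduction with
  | _ J ih =>
  rcases J.eq_empty_or_nonempty with rfl | hne
  · simp
  set m := J.max' hne with hm
  have hmJ : m ∈ J := J.max'_mem hne
  have hm1 : 1 ≤ m := hJ1 m hmJ
  set K := J.erase m with hK
  have hKsub : K ⊂ J := Finset.erase_ssubset hmJ
  have hKJ : K ⊆ J := hKsub.subset
  -- measurability with respect to m0
  have hHm0 : ∀ i ∈ J, Measurable (H i) := fun i hi =>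
    (hHmeas i (hJ1 i hi)).mono (ℱ.le i) le_rfl
  have hpm0 : ∀ i ∈ J, Measurable (p i) := fun i hi =>
    (hpmeas i (hJ1 i hi)).mono (ℱ.le _) le_rfl
  -- a.e. bounds on p
  have haep : ∀ᵐ ω ∂μ, ∀ i ∈ J, c ≤ p i ω ∧ p i ω ≤ 1 :=
    (ae_ball_iff J.countable_toSet).2 fun i hi => hpb i (hJ1 i hi)
  -- each factor is bounded by c⁻¹ where the p-bounds hold
  have hfac : ∀ i ∈ J, ∀ ω, c ≤ p i ω → p i ω ≤ 1 → |H i ω / p i ω| ≤ c⁻¹ := by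
    intro i hi ω h1 h2
    have hH1 : |H i ω| ≤ 1 := by
      rcases hH01 i (hJ1 i hi) ω with h | h <;> simp [h]
    have hpa : c ≤ |p i ω| := by
      rwa [abs_of_nonneg (le_trans hc0.le h1)]
    calc |H i ω / p i ω| = |H i ω| / |p i ω| := abs_div _ _
      _ ≤ 1 / c := div_le_div₀ zero_le_one hH1 hc0 hpa
      _ = c⁻¹ := one_div c
  -- integrability of partial products
  have hint : ∀ S : Finset ℕ, S ⊆ J →
      Integrable (fun ω => ∏ i ∈ S, H i ω / p i ω) μ := by
    intro S hS
    have hmeas : Measurable (fun ω => ∏ i ∈ S, H i ω / p i ω) :=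
      Finset.measurable_prod S fun i hi => (hHm0 i (hS hi)).div (hpm0 i (hS hi))
    refine Integrable.mono' (integrable_const (c⁻¹ ^ S.card))
      hmeas.aestronglyMeasurable ?_
    filter_upwards [haep] with ω hω
    rw [Real.norm_eq_abs, Finset.abs_prod]
    calc ∏ i ∈ S, |H i ω / p i ω| ≤ ∏ i ∈ S, c⁻¹ := by
          refine Finset.prod_le_prod (fun i _ => abs_nonneg _) fun i hi => ?_
          exact hfac i (hS hi) ω (hω i (hS hi)).1 (hω i (hS hi)).2
      _ = c⁻¹ ^ S.card := Finset.prod_const _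
  -- integrability of H m
  have hintH : Integrable (H m) μ := by
    refine Integrable.mono' (integrable_const 1) (hHm0 m hmJ).aestronglyMeasurable ?_
    filter_upwards with ω
    rcases hH01 m hm1 ω with h | h <;> simp [h]
  -- the function g
  set g : Ω → ℝ := fun ω => (∏ i ∈ K, H i ω / p i ω) / p m ω with hg
  have hgmeas : StronglyMeasurable[ℱ (m - 1)] g := by
    refine Measurable.stronglyMeasurable ?_
    refine Measurable.div ?_ ((hpmeas m hm1).mono le_rfl le_rfl)
    refine Finset.measurable_prod K fun i hi => Measurable.div ?_ ?_
    · have hi' : i < m :=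
        lt_of_le_of_ne (J.le_max' i (Finset.mem_of_mem_erase hi)) (Finset.ne_of_mem_erase hi)
      exact (hHmeas i (hJ1 i (hKJ hi))).mono (ℱ.mono (Nat.le_sub_one_of_lt hi')) le_rfl
    · have hi' : i ≤ m := Finset.le_max' J i (hKJ hi)
      exact (hpmeas i (hJ1 i (hKJ hi))).mono (ℱ.mono (by omega)) le_rfl
  -- pointwise identity: the product over J equals g * H m
  have hprod : ∀ ω, ∏ i ∈ J, H i ω / p i ω = g ω * H m ω := by
    intro ω
    rw [← Finset.prod_erase_mul J _ hmJ, hg]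
    ring
  have hintgH : Integrable (g * (H m)) μ := by
    have := hint J Finset.Subset.rfl
    refine this.congr (Filter.Eventually.of_forall fun ω => ?_)
    exact (hprod ω)
  -- conditional expectation computation
  have hce : μ[g * H m | ℱ (m - 1)] =ᵐ[μ] fun ω => ∏ i ∈ K, H i ω / p i ω := by
    calc μ[g * H m | ℱ (m - 1)]
        =ᵐ[μ] g * μ[H m | ℱ (m - 1)] :=
          condExp_mul_of_stronglyMeasurable_left hgmeas hintgH hintH
      _ =ᵐ[μ] g * p m := by
          filter_upwards [hcond m hm1] with ω hω
          simp [hω]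
      _ =ᵐ[μ] fun ω => ∏ i ∈ K, H i ω / p i ω := by
          filter_upwards [hpb m hm1] with ω hω
          have hpne : p m ω ≠ 0 := ne_of_gt (lt_of_lt_of_le hc0 hω.1)
          simp only [Pi.mul_apply, hg]
          rw [div_mul_cancel₀ _ hpne]
  calc ∫ ω, ∏ i ∈ J, H i ω / p i ω ∂μ
      = ∫ ω, (g * H m) ω ∂μ := by
        refine integral_congr_ae (Filter.Eventually.of_forall fun ω => ?_)
        exact hprod ω
    _ = ∫ ω, (μ[g * H m | ℱ (m - 1)]) ω ∂μ := (integral_condExp (ℱ.le _)).symm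
    _ = ∫ ω, ∏ i ∈ K, H i ω / p i ω ∂μ := integral_congr_ae hce
    _ = 1 := ih K hKsub fun i hi => hJ1 i (hKJ hi)
end

section
/- If J and J' are disjoint finite sets of indices, then E[Ŝ(J) · Ŝ(J')] = 1. -/
open MeasureTheory Finset

private lemma key {Ω : Type*} {m0 : MeasurableSpace Ω} {μ : Measure Ω}
    [IsProbabilityMeasure μ] (ℱ : Filtration ℕ m0)
    (c : ℝ) (hc0 : 0 < c)
    (H p : ℕ → Ω → ℝ)
    (hHmeas : ∀ i, 1 ≤ i → Measurable[ℱ i] (H i))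
    (hH01 : ∀ i, 1 ≤ i → ∀ ω, H i ω = 0 ∨ H i ω = 1)
    (hpmeas : ∀ i, 1 ≤ i → Measurable[ℱ (i - 1)] (p i))
    (hpb : ∀ i, 1 ≤ i → ∀ᵐ ω ∂μ, c ≤ p i ω ∧ p i ω ≤ 1)
    (hcond : ∀ i, 1 ≤ i → μ[H i | ℱ (i - 1)] =ᵐ[μ] p i)
    (K : Finset ℕ) :
    (∀ i ∈ K, 1 ≤ i) → ∫ ω, ∏ i ∈ K, H i ω / p i ω ∂μ = 1 := by
  induction K using Finset.induction_on_max with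
  | empty => intro _; simp
  | insert a s hlt ih =>
    intro hK
    have ha : a ∉ s := fun h => lt_irrefl a (hlt a h)
    have h1a : 1 ≤ a := hK a (mem_insert_self a s)
    have hs1 : ∀ i ∈ s, 1 ≤ i := fun i hi => hK i (mem_insert_of_mem hi)
    set m := ℱ (a - 1) with hm_def
    have hm : m ≤ m0 := ℱ.le (a - 1)
    -- measurability of the partial product
    have hFs : Measurable[m] (fun ω => ∏ i ∈ s, H i ω / p i ω) := by
      apply Finset.measurable_prod
      intro i hi
      have hile : i ≤ a - 1 := by have := hlt i hi; omega
      exact ((hHmeas i (hs1 i hi)).mono (ℱ.mono hile) le_rfl).div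
        ((hpmeas i (hs1 i hi)).mono (ℱ.mono (by omega)) le_rfl)
    -- the multiplier g
    set G : Ω → ℝ := fun ω => (∏ i ∈ s, H i ω / p i ω) * (p a ω)⁻¹ with hG_def
    have hGmeas : Measurable[m] G := hFs.mul (hpmeas a h1a).inv
    -- a.e. bounds on factors
    have hfac : ∀ᵐ ω ∂μ, ∀ i ∈ (s : Set ℕ), c ≤ p i ω ∧ p i ω ≤ 1 :=
      (ae_ball_iff s.countable_toSet).2 (fun i hi => hpb i (hs1 i (Finset.mem_coe.1 hi)))
    have hbound : ∀ᵐ ω ∂μ, ‖G ω‖ ≤ (1 / c) ^ s.card * (1 / c) := by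
      filter_upwards [hfac, hpb a h1a] with ω hω hωa
      have hprod : |∏ i ∈ s, H i ω / p i ω| ≤ (1 / c) ^ s.card := by
        rw [Finset.abs_prod]
        calc ∏ i ∈ s, |H i ω / p i ω| ≤ ∏ i ∈ s, (1 / c) := by
              apply Finset.prod_le_prod (fun i _ => abs_nonneg _)
              intro i hi
              have hpi := hω i (Finset.mem_coe.2 hi)
              have hpi0 : 0 < p i ω := lt_of_lt_of_le hc0 hpi.1
              have hHi : 0 ≤ H i ω ∧ H i ω ≤ 1 := by
                rcases hH01 i (hs1 i hi) ω with h | h <;> rw [h] <;> norm_num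
              rw [abs_of_nonneg (div_nonneg hHi.1 hpi0.le)]
              exact div_le_div₀ (by norm_num) hHi.2 hc0 hpi.1
          _ = (1 / c) ^ s.card := by rw [Finset.prod_const]
      have hinv : |(p a ω)⁻¹| ≤ 1 / c := by
        have hpa0 : 0 < p a ω := lt_of_lt_of_le hc0 hωa.1
        rw [abs_of_nonneg (inv_nonneg.2 hpa0.le), one_div]
        exact inv_anti₀ hc0 hωa.1
      calc ‖G ω‖ = |∏ i ∈ s, H i ω / p i ω| * |(p a ω)⁻¹| := by
            simp only [hG_def, Real.norm_eq_abs, abs_mul]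
        _ ≤ (1 / c) ^ s.card * (1 / c) :=
            mul_le_mul hprod hinv (abs_nonneg _) (by positivity)
    -- integrability of H a
    have hHa_int : Integrable (H a) μ := by
      refine Integrable.mono' (integrable_const 1)
        ((hHmeas a h1a).mono (ℱ.le a) le_rfl).aestronglyMeasurable ?_
      filter_upwards with ω
      rcases hH01 a h1a ω with h | h <;> rw [h] <;> norm_num
    -- pull-out
    have hpull : μ[G * H a | m] =ᵐ[μ] G * μ[H a | m] :=
      condExp_stronglyMeasurable_mul_of_bound hm hGmeas.stronglyMeasurable hHa_int
        ((1 / c) ^ s.card * (1 / c)) hbound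
    have hrw : (fun ω => ∏ i ∈ insert a s, H i ω / p i ω) = G * H a := by
      funext ω
      rw [Finset.prod_insert ha]
      simp only [hG_def, Pi.mul_apply, div_eq_mul_inv]
      ring
    calc ∫ ω, ∏ i ∈ insert a s, H i ω / p i ω ∂μ
        = ∫ ω, (G * H a) ω ∂μ := by rw [hrw]
      _ = ∫ ω, (μ[G * H a | m]) ω ∂μ := (integral_condExp hm).symm
      _ = ∫ ω, G ω * p a ω ∂μ := by
          refine integral_congr_ae ?_
          filter_upwards [hpull, hcond a h1a] with ω h1 h2
          rw [h1]; simp only [Pi.mul_apply]; rw [h2]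
      _ = ∫ ω, ∏ i ∈ s, H i ω / p i ω ∂μ := by
          refine integral_congr_ae ?_
          filter_upwards [hpb a h1a] with ω hω
          have hpa0 : p a ω ≠ 0 := (lt_of_lt_of_le hc0 hω.1).ne'
          simp only [hG_def]
          rw [mul_assoc, inv_mul_cancel₀ hpa0, mul_one]
      _ = 1 := ih hs1

theorem stmt4 {Ω : Type*} {m0 : MeasurableSpace Ω} {μ : Measure Ω}
    [IsProbabilityMeasure μ] (ℱ : Filtration ℕ m0)
    (c : ℝ) (hc0 : 0 < c) (hc1 : c ≤ 1)
    (H p : ℕ → Ω → ℝ)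
    (hHmeas : ∀ i, 1 ≤ i → Measurable[ℱ i] (H i))
    (hH01 : ∀ i, 1 ≤ i → ∀ ω, H i ω = 0 ∨ H i ω = 1)
    (hpmeas : ∀ i, 1 ≤ i → Measurable[ℱ (i - 1)] (p i))
    (hpb : ∀ i, 1 ≤ i → ∀ᵐ ω ∂μ, c ≤ p i ω ∧ p i ω ≤ 1)
    (hcond : ∀ i, 1 ≤ i → μ[H i | ℱ (i - 1)] =ᵐ[μ] p i)
    (J J' : Finset ℕ) (hJ1 : ∀ i ∈ J, 1 ≤ i) (hJ'1 : ∀ i ∈ J', 1 ≤ i)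
    (hdisj : Disjoint J J') :
    ∫ ω, (∏ i ∈ J, H i ω / p i ω) * (∏ i ∈ J', H i ω / p i ω) ∂μ = 1 := by
  have := key ℱ c hc0 H p hHmeas hH01 hpmeas hpb hcond (J ∪ J')
    (fun i hi => (Finset.mem_union.1 hi).elim (hJ1 i) (hJ'1 i))
  simpa [Finset.prod_union hdisj] using this
end

section
/- If J and J' are disjoint finite sets of indices, then the covariance of Ŝ(J) and Ŝ(J') is zero, i.e. Cov(Ŝ(J), Ŝ(J')) = 0. -/
open MeasureTheory Finset

theorem stmt5 {Ω : Type*} {m0 : MeasurableSpace Ω} {μ : Measure Ω}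
    [IsProbabilityMeasure μ] (ℱ : Filtration ℕ m0)
    (c : ℝ) (hc0 : 0 < c) (hc1 : c ≤ 1)
    (H p : ℕ → Ω → ℝ)
    (hHmeas : ∀ i, 1 ≤ i → Measurable[ℱ i] (H i))
    (hH01 : ∀ i, 1 ≤ i → ∀ ω, H i ω = 0 ∨ H i ω = 1)
    (hpmeas : ∀ i, 1 ≤ i → Measurable[ℱ (i - 1)] (p i))
    (hpb : ∀ i, 1 ≤ i → ∀ᵐ ω ∂μ, c ≤ p i ω ∧ p i ω ≤ 1)
    (hcond : ∀ i, 1 ≤ i → μ[H i | ℱ (i - 1)] =ᵐ[μ] p i)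
    (J J' : Finset ℕ) (hJ1 : ∀ i ∈ J, 1 ≤ i) (hJ'1 : ∀ i ∈ J', 1 ≤ i)
    (hdisj : Disjoint J J') :
    ∫ ω, ((∏ i ∈ J, H i ω / p i ω) - ∫ ω', ∏ i ∈ J, H i ω' / p i ω' ∂μ)
        * ((∏ i ∈ J', H i ω / p i ω) - ∫ ω', ∏ i ∈ J', H i ω' / p i ω' ∂μ) ∂μ = 0 := by
  -- measurability of each factor
  have hfac_meas : ∀ i, 1 ≤ i → Measurable (fun ω => H i ω / p i ω) := fun i hi =>
    ((hHmeas i hi).mono (ℱ.le i) le_rfl).div ((hpmeas i hi).mono (ℱ.le _) le_rfl)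
  have hSmeas : ∀ K : Finset ℕ, (∀ i ∈ K, 1 ≤ i) →
      Measurable (fun ω => ∏ i ∈ K, H i ω / p i ω) := fun K hK =>
    Finset.measurable_prod K (fun i hi => hfac_meas i (hK i hi))
  -- a.e. bound
  have hbdd : ∀ K : Finset ℕ, (∀ i ∈ K, 1 ≤ i) →
      ∀ᵐ ω ∂μ, ‖∏ i ∈ K, H i ω / p i ω‖ ≤ c⁻¹ ^ K.card := by
    intro K hK
    have hae : ∀ᵐ ω ∂μ, ∀ i ∈ K, c ≤ p i ω ∧ p i ω ≤ 1 := by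
      exact (ae_ball_iff K.countable_toSet).mpr fun i hi => hpb i (hK i hi)
    filter_upwards [hae] with ω hω
    calc ‖∏ i ∈ K, H i ω / p i ω‖ = ∏ i ∈ K, |H i ω / p i ω| := by
          rw [Real.norm_eq_abs, Finset.abs_prod]
      _ ≤ ∏ _i ∈ K, c⁻¹ := by
          refine Finset.prod_le_prod (fun i _ => abs_nonneg _) (fun i hi => ?_)
          have hp := (hω i hi).1
          have hH1 : |H i ω| ≤ 1 := by
            rcases hH01 i (hK i hi) ω with h | h <;> simp [h]
          have hpabs : c ≤ |p i ω| := le_trans hp (le_abs_self _)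
          rw [abs_div, inv_eq_one_div]
          exact div_le_div₀ zero_le_one hH1 hc0 hpabs
      _ = c⁻¹ ^ K.card := Finset.prod_const _
  -- integrability
  have hSint : ∀ K : Finset ℕ, (∀ i ∈ K, 1 ≤ i) →
      Integrable (fun ω => ∏ i ∈ K, H i ω / p i ω) μ := fun K hK =>
    (integrable_const (c⁻¹ ^ K.card)).mono' (hSmeas K hK).aestronglyMeasurable (hbdd K hK)
  -- key: expectation is 1
  have key : ∀ n : ℕ, ∀ K : Finset ℕ, (∀ i ∈ K, 1 ≤ i ∧ i ≤ n) →
      ∫ ω, ∏ i ∈ K, H i ω / p i ω ∂μ = 1 := by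
    intro n
    induction n with
    | zero =>
      intro K hK
      have hKe : K = ∅ := Finset.eq_empty_of_forall_notMem (fun i hi => by
        have := hK i hi; omega)
      simp [hKe]
    | succ n ih =>
      intro K hK
      by_cases hmem : n + 1 ∈ K
      · set K₀ := K.erase (n + 1) with hK₀def
        have hK₀ : ∀ i ∈ K₀, 1 ≤ i ∧ i ≤ n := by
          intro i hi
          have h1 := Finset.mem_erase.mp hi
          have h2 := hK i h1.2
          have h3 := h1.1
          omega
        set g := fun ω => ∏ i ∈ K₀, H i ω / p i ω with hgdef
        have hg_meas : Measurable[ℱ n] g := by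
          refine Finset.measurable_prod _ (fun i hi => ?_)
          obtain ⟨hi1, hi2⟩ := hK₀ i hi
          exact ((hHmeas i hi1).mono (ℱ.mono hi2) le_rfl).div
            ((hpmeas i hi1).mono (ℱ.mono (by omega : i - 1 ≤ n)) le_rfl)
        have hp_meas : Measurable[ℱ n] (p (n + 1)) := by
          have := hpmeas (n + 1) (by omega)
          simpa using this
        set f := fun ω => g ω * (p (n + 1) ω)⁻¹ with hfdef
        have hf_sm : StronglyMeasurable[ℱ n] f := (hg_meas.mul hp_meas.inv).stronglyMeasurable
        have hK1 : ∀ i ∈ K, 1 ≤ i := fun i hi => (hK i hi).1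
        have heq : (fun ω => ∏ i ∈ K, H i ω / p i ω) = f * H (n + 1) := by
          funext ω
          rw [Pi.mul_apply, ← Finset.mul_prod_erase K _ hmem]
          simp only [hfdef, hgdef, div_eq_mul_inv]
          ring
        have hint_fH : Integrable (f * H (n + 1)) μ := by
          rw [← heq]; exact hSint K hK1
        have hint_H : Integrable (H (n + 1)) μ := by
          refine (integrable_const (1 : ℝ)).mono'
            ((hHmeas (n + 1) (by omega)).mono (ℱ.le _) le_rfl).aestronglyMeasurable ?_
          refine Filter.Eventually.of_forall fun ω => ?_
          rcases hH01 (n + 1) (by omega) ω with h | h <;> simp [h]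
        have hpull := condExp_mul_of_stronglyMeasurable_left hf_sm hint_fH hint_H
        have hcondH : μ[H (n + 1) | ℱ n] =ᵐ[μ] p (n + 1) := by
          simpa using hcond (n + 1) (by omega)
        calc ∫ ω, ∏ i ∈ K, H i ω / p i ω ∂μ
            = ∫ ω, (f * H (n + 1)) ω ∂μ := by rw [heq]
          _ = ∫ ω, (μ[f * H (n + 1) | ℱ n]) ω ∂μ := (integral_condExp (ℱ.le n)).symm
          _ = ∫ ω, (f * μ[H (n + 1) | ℱ n]) ω ∂μ := integral_congr_ae hpull
          _ = ∫ ω, f ω * p (n + 1) ω ∂μ := by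
              refine integral_congr_ae ?_
              filter_upwards [hcondH] with ω h
              simp [h]
          _ = ∫ ω, g ω ∂μ := by
              refine integral_congr_ae ?_
              filter_upwards [hpb (n + 1) (by omega)] with ω hω
              have hne : p (n + 1) ω ≠ 0 := ne_of_gt (lt_of_lt_of_le hc0 hω.1)
              simp only [hfdef]
              rw [mul_assoc, inv_mul_cancel₀ hne, mul_one]
          _ = 1 := ih K₀ hK₀
      · refine ih K (fun i hi => ?_)
        have h1 := hK i hi
        have h2 : i ≠ n + 1 := fun h => hmem (h ▸ hi)
        omega
  have hone : ∀ K : Finset ℕ, (∀ i ∈ K, 1 ≤ i) →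
      ∫ ω, ∏ i ∈ K, H i ω / p i ω ∂μ = 1 := fun K hK =>
    key (K.sup id) K (fun i hi => ⟨hK i hi, Finset.le_sup (f := id) hi⟩)
  have hJJ'1 : ∀ i ∈ J ∪ J', 1 ≤ i := fun i hi =>
    (Finset.mem_union.mp hi).elim (hJ1 i) (hJ'1 i)
  rw [hone J hJ1, hone J' hJ'1]
  have hexp : ∀ ω : Ω, ((∏ i ∈ J, H i ω / p i ω) - 1) * ((∏ i ∈ J', H i ω / p i ω) - 1)
      = ((∏ i ∈ J ∪ J', H i ω / p i ω) - (∏ i ∈ J, H i ω / p i ω)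
          - (∏ i ∈ J', H i ω / p i ω)) + 1 := by
    intro ω
    rw [Finset.prod_union hdisj]
    ring
  simp only [hexp]
  have hI2 : Integrable (fun ω => (∏ i ∈ J ∪ J', H i ω / p i ω)
      - (∏ i ∈ J, H i ω / p i ω)) μ := (hSint _ hJJ'1).sub (hSint _ hJ1)
  have hI1 : Integrable (fun ω => (∏ i ∈ J ∪ J', H i ω / p i ω)
      - (∏ i ∈ J, H i ω / p i ω) - (∏ i ∈ J', H i ω / p i ω)) μ := hI2.sub (hSint _ hJ'1)
  rw [integral_add hI1 (integrable_const 1),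
    integral_sub hI2 (hSint _ hJ'1),
    integral_sub (hSint _ hJJ'1) (hSint _ hJ1),
    hone _ hJJ'1, hone _ hJ1, hone _ hJ'1]
  simp
end

section
/- For any finite sets of indices J and J', the random variable Ĉ(J, J') = Ŝ(J ∪ J') · (Ŝ(J ∩ J') − 1) is an unbiased estimator of the covariance of Ŝ(J) and Ŝ(J'); that is, E[Ŝ(J ∪ J') · (Ŝ(J ∩ J') − 1)] = Cov(Ŝ(J), Ŝ(J')). -/
open MeasureTheory Finset

theorem stmt8 {Ω : Type*} {m0 : MeasurableSpace Ω} {μ : Measure Ω}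
    [IsProbabilityMeasure μ] (ℱ : Filtration ℕ m0)
    (c : ℝ) (hc0 : 0 < c) (hc1 : c ≤ 1)
    (H p : ℕ → Ω → ℝ)
    (hHmeas : ∀ i, 1 ≤ i → Measurable[ℱ i] (H i))
    (hH01 : ∀ i, 1 ≤ i → ∀ ω, H i ω = 0 ∨ H i ω = 1)
    (hpmeas : ∀ i, 1 ≤ i → Measurable[ℱ (i - 1)] (p i))
    (hpb : ∀ i, 1 ≤ i → ∀ᵐ ω ∂μ, c ≤ p i ω ∧ p i ω ≤ 1)
    (hcond : ∀ i, 1 ≤ i → μ[H i | ℱ (i - 1)] =ᵐ[μ] p i)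
    (J J' : Finset ℕ) (hJ1 : ∀ i ∈ J, 1 ≤ i) (hJ'1 : ∀ i ∈ J', 1 ≤ i) :
    ∫ ω, (∏ i ∈ J ∪ J', H i ω / p i ω) * ((∏ i ∈ J ∩ J', H i ω / p i ω) - 1) ∂μ
      = ∫ ω, ((∏ i ∈ J, H i ω / p i ω) - ∫ ω', ∏ i ∈ J, H i ω' / p i ω' ∂μ)
          * ((∏ i ∈ J', H i ω / p i ω) - ∫ ω', ∏ i ∈ J', H i ω' / p i ω' ∂μ) ∂μ := by
  -- measurability of the products w.r.t. ℱ n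
  have hSm : ∀ (K : Finset ℕ) (n : ℕ), (∀ i ∈ K, 1 ≤ i) → (∀ i ∈ K, i ≤ n) →
      Measurable[ℱ n] (fun ω => ∏ i ∈ K, H i ω / p i ω) := by
    intro K n h1 hn
    apply Finset.measurable_prod
    intro i hi
    exact ((hHmeas i (h1 i hi)).mono (ℱ.mono (hn i hi)) le_rfl).div
      ((hpmeas i (h1 i hi)).mono (ℱ.mono (le_trans (Nat.sub_le i 1) (hn i hi))) le_rfl)
  have hSm0 : ∀ (K : Finset ℕ), (∀ i ∈ K, 1 ≤ i) →
      Measurable (fun ω => ∏ i ∈ K, H i ω / p i ω) := by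
    intro K h1
    apply Finset.measurable_prod
    intro i hi
    exact ((hHmeas i (h1 i hi)).mono (ℱ.le i) le_rfl).div
      ((hpmeas i (h1 i hi)).mono (ℱ.le (i - 1)) le_rfl)
  -- a.e. bound on each factor
  have hbd : ∀ (K : Finset ℕ), (∀ i ∈ K, 1 ≤ i) →
      ∀ᵐ ω ∂μ, ∀ i ∈ K, 0 ≤ H i ω / p i ω ∧ H i ω / p i ω ≤ 1 / c := by
    intro K h1
    rw [Filter.eventually_all_finset K]
    intro i hi
    filter_upwards [hpb i (h1 i hi)] with ω hω
    obtain ⟨hcp, hp1⟩ := hω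
    have hppos : 0 < p i ω := lt_of_lt_of_le hc0 hcp
    rcases hH01 i (h1 i hi) ω with h | h
    · rw [h, zero_div]
      exact ⟨le_refl 0, by positivity⟩
    · rw [h]
      exact ⟨by positivity, one_div_le_one_div_of_le hc0 hcp⟩
  -- a.e. bound on the products
  have hprodbd : ∀ (K : Finset ℕ), (∀ i ∈ K, 1 ≤ i) →
      ∀ᵐ ω ∂μ, ‖∏ i ∈ K, H i ω / p i ω‖ ≤ (1 / c) ^ K.card := by
    intro K h1
    filter_upwards [hbd K h1] with ω hω
    rw [Real.norm_eq_abs, abs_of_nonneg (Finset.prod_nonneg fun i hi => (hω i hi).1)]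
    calc ∏ i ∈ K, H i ω / p i ω ≤ ∏ i ∈ K, (1 / c) :=
          Finset.prod_le_prod (fun i hi => (hω i hi).1) (fun i hi => (hω i hi).2)
      _ = (1 / c) ^ K.card := by rw [Finset.prod_const]
  -- integrability of the products
  have hint : ∀ (K : Finset ℕ), (∀ i ∈ K, 1 ≤ i) →
      Integrable (fun ω => ∏ i ∈ K, H i ω / p i ω) μ := by
    intro K h1
    exact Integrable.mono' (integrable_const ((1 / c) ^ K.card))
      (hSm0 K h1).aestronglyMeasurable (hprodbd K h1)
  -- integrability of products of two such products
  have hint2 : ∀ (K1 K2 : Finset ℕ), (∀ i ∈ K1, 1 ≤ i) → (∀ i ∈ K2, 1 ≤ i) →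
      Integrable (fun ω => (∏ i ∈ K1, H i ω / p i ω) * ∏ i ∈ K2, H i ω / p i ω) μ := by
    intro K1 K2 h1 h2
    refine Integrable.mono' (integrable_const ((1 / c) ^ K1.card * (1 / c) ^ K2.card))
      ((hSm0 K1 h1).mul (hSm0 K2 h2)).aestronglyMeasurable ?_
    filter_upwards [hprodbd K1 h1, hprodbd K2 h2] with ω hb1 hb2
    rw [norm_mul]
    exact mul_le_mul hb1 hb2 (norm_nonneg _) (by positivity)
  -- expectation of each product is 1
  have hexp : ∀ (K : Finset ℕ), (∀ i ∈ K, 1 ≤ i) →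
      ∫ ω, ∏ i ∈ K, H i ω / p i ω ∂μ = 1 := by
    intro K
    induction K using Finset.induction_on_max with
    | empty => intro _; simp
    | insert a s hmax ih =>
      intro h1
      have ha1 : 1 ≤ a := h1 a (mem_insert_self a s)
      have hs1 : ∀ i ∈ s, 1 ≤ i := fun i hi => h1 i (mem_insert_of_mem hi)
      have hanotin : a ∉ s := fun h => lt_irrefl a (hmax a h)
      set X := fun ω => ∏ i ∈ s, H i ω / p i ω with hX
      have hXmeas : Measurable[ℱ (a - 1)] X :=
        hSm s (a - 1) hs1 (fun i hi => Nat.le_sub_one_of_lt (hmax i hi))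
      have hYmeas : Measurable[ℱ (a - 1)] (fun ω => X ω / p a ω) :=
        hXmeas.div (hpmeas a ha1)
      have hHaint : Integrable (H a) μ := by
        refine Integrable.mono' (integrable_const 1)
          ((hHmeas a ha1).mono (ℱ.le a) le_rfl).aestronglyMeasurable
          (Filter.Eventually.of_forall fun ω => ?_)
        rcases hH01 a ha1 ω with h | h <;> simp [h]
      have hprodint : Integrable ((fun ω => X ω / p a ω) * H a) μ := by
        refine (hint (insert a s) h1).congr (Filter.Eventually.of_forall fun ω => ?_)
        simp only [Finset.prod_insert hanotin, Pi.mul_apply, hX]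
        ring
      calc ∫ ω, ∏ i ∈ insert a s, H i ω / p i ω ∂μ
          = ∫ ω, ((fun ω => X ω / p a ω) * H a) ω ∂μ := by
            refine integral_congr_ae (Filter.Eventually.of_forall fun ω => ?_)
            simp only [Finset.prod_insert hanotin, Pi.mul_apply, hX]
            ring
        _ = ∫ ω, (μ[(fun ω => X ω / p a ω) * H a | ℱ (a - 1)]) ω ∂μ :=
            (integral_condExp (ℱ.le _)).symm
        _ = ∫ ω, ((fun ω => X ω / p a ω) * μ[H a | ℱ (a - 1)]) ω ∂μ :=
            integral_congr_ae
              (condExp_mul_of_stronglyMeasurable_left hYmeas.stronglyMeasurable hprodint hHaint)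
        _ = ∫ ω, X ω ∂μ := by
            refine integral_congr_ae ?_
            filter_upwards [hcond a ha1, hpb a ha1] with ω hc' hp'
            simp only [Pi.mul_apply]
            rw [hc', div_mul_cancel₀]
            exact ne_of_gt (lt_of_lt_of_le hc0 hp'.1)
        _ = 1 := ih hs1
  have hJU1 : ∀ i ∈ J ∪ J', 1 ≤ i := by
    intro i hi
    rcases mem_union.mp hi with h | h
    · exact hJ1 i h
    · exact hJ'1 i h
  have hJI1 : ∀ i ∈ J ∩ J', 1 ≤ i := fun i hi => hJ1 i (mem_inter.mp hi).1
  -- rewrite the inner integrals on the RHS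
  rw [hexp J hJ1, hexp J' hJ'1]
  have hUV : ∀ ω, (∏ i ∈ J ∪ J', H i ω / p i ω) * ∏ i ∈ J ∩ J', H i ω / p i ω
      = (∏ i ∈ J, H i ω / p i ω) * ∏ i ∈ J', H i ω / p i ω :=
    fun ω => Finset.prod_union_inter
  have lhs_eq : ∫ ω, (∏ i ∈ J ∪ J', H i ω / p i ω) * ((∏ i ∈ J ∩ J', H i ω / p i ω) - 1) ∂μ
      = (∫ ω, (∏ i ∈ J, H i ω / p i ω) * ∏ i ∈ J', H i ω / p i ω ∂μ) - 1 := by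
    have : ∫ ω, (∏ i ∈ J ∪ J', H i ω / p i ω) * ((∏ i ∈ J ∩ J', H i ω / p i ω) - 1) ∂μ
        = ∫ ω, ((∏ i ∈ J ∪ J', H i ω / p i ω) * ∏ i ∈ J ∩ J', H i ω / p i ω)
            - ∏ i ∈ J ∪ J', H i ω / p i ω ∂μ :=
      integral_congr_ae (Filter.Eventually.of_forall fun ω => by ring)
    rw [this, integral_sub (hint2 _ _ hJU1 hJI1) (hint _ hJU1), hexp _ hJU1]
    congr 1
    exact integral_congr_ae (Filter.Eventually.of_forall fun ω => hUV ω)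
  have rhs_eq : ∫ ω, ((∏ i ∈ J, H i ω / p i ω) - 1) * ((∏ i ∈ J', H i ω / p i ω) - 1) ∂μ
      = (∫ ω, (∏ i ∈ J, H i ω / p i ω) * ∏ i ∈ J', H i ω / p i ω ∂μ) - 1 := by
    have h1 : ∫ ω, ((∏ i ∈ J, H i ω / p i ω) - 1) * ((∏ i ∈ J', H i ω / p i ω) - 1) ∂μ
        = ∫ ω, ((∏ i ∈ J, H i ω / p i ω) * ∏ i ∈ J', H i ω / p i ω)
            - ((∏ i ∈ J, H i ω / p i ω) + (∏ i ∈ J', H i ω / p i ω) - 1) ∂μ :=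
      integral_congr_ae (Filter.Eventually.of_forall fun ω => by ring)
    have hsum : Integrable (fun ω => (∏ i ∈ J, H i ω / p i ω) + ∏ i ∈ J', H i ω / p i ω) μ := by
      exact (hint _ hJ1).add (hint _ hJ'1)
    have hsub : Integrable
        (fun ω => (∏ i ∈ J, H i ω / p i ω) + (∏ i ∈ J', H i ω / p i ω) - 1) μ := by
      exact hsum.sub (integrable_const 1)
    rw [h1, integral_sub (hint2 _ _ hJ1 hJ'1) hsub,
      integral_sub hsum (integrable_const 1),
      integral_add (hint _ hJ1) (hint _ hJ'1), hexp _ hJ1, hexp _ hJ'1]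
    simp
  rw [lhs_eq, rhs_eq]
end

section
/- For any finite sets of indices J and J', the covariance of the product selection estimators is nonnegative: Cov(Ŝ(J), Ŝ(J')) ≥ 0. -/
open MeasureTheory Finset

section Stmt9Aux

variable {Ω : Type*} {m0 : MeasurableSpace Ω} {μ : Measure Ω} [IsProbabilityMeasure μ]

private lemma stmt9_prod_sm (ℱ : Filtration ℕ m0) (g : ℕ → Ω → ℝ) (K : Finset ℕ) (n : ℕ)
    (hmeas : ∀ i ∈ K, StronglyMeasurable[ℱ i] (g i)) (hle : ∀ i ∈ K, i ≤ n) :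
    StronglyMeasurable[ℱ n] (fun ω => ∏ i ∈ K, g i ω) := by
  exact Finset.stronglyMeasurable_fun_prod K fun i hi => (hmeas i hi).mono (ℱ.mono (hle i hi))

private lemma stmt9_prod_bdd (g : ℕ → Ω → ℝ) (C : ℝ) (K : Finset ℕ)
    (hbd : ∀ i ∈ K, ∀ᵐ ω ∂μ, 0 ≤ g i ω ∧ g i ω ≤ C) :
    ∀ᵐ ω ∂μ, 0 ≤ ∏ i ∈ K, g i ω ∧ ∏ i ∈ K, g i ω ≤ C ^ K.card := by
  have h : ∀ᵐ ω ∂μ, ∀ i ∈ K, 0 ≤ g i ω ∧ g i ω ≤ C :=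
    (ae_ball_iff K.countable_toSet).2 hbd
  filter_upwards [h] with ω hω
  constructor
  · exact Finset.prod_nonneg fun i hi => (hω i hi).1
  · calc ∏ i ∈ K, g i ω ≤ ∏ _i ∈ K, C :=
          Finset.prod_le_prod (fun i hi => (hω i hi).1) (fun i hi => (hω i hi).2)
    _ = C ^ K.card := by rw [Finset.prod_const]

private lemma stmt9_int_of_bdd {f : Ω → ℝ} {D : ℝ} (hf : AEStronglyMeasurable f μ)
    (h : ∀ᵐ ω ∂μ, 0 ≤ f ω ∧ f ω ≤ D) : Integrable f μ := by
  refine Integrable.mono' (integrable_const D) hf ?_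
  filter_upwards [h] with ω hω
  rw [Real.norm_eq_abs, abs_of_nonneg hω.1]
  exact hω.2

/-- Main induction lemma: inequality version. -/
private lemma stmt9_key (ℱ : Filtration ℕ m0) (g : ℕ → Ω → ℝ) (C : ℝ) :
    ∀ K : Finset ℕ, (∀ i ∈ K, 1 ≤ i) →
    (∀ i ∈ K, StronglyMeasurable[ℱ i] (g i)) →
    (∀ i ∈ K, ∀ᵐ ω ∂μ, 0 ≤ g i ω ∧ g i ω ≤ C) →
    (∀ i ∈ K, ∀ᵐ ω ∂μ, 1 ≤ (μ[g i | ℱ (i - 1)]) ω) →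
    Integrable (fun ω => ∏ i ∈ K, g i ω) μ ∧ 1 ≤ ∫ ω, ∏ i ∈ K, g i ω ∂μ := by
  intro K
  induction K using Finset.induction_on_max with
  | empty =>
    intro _ _ _ _
    simp
  | insert a s ha ih =>
    intro hK hmeas hbd hce
    have ha' : a ∉ s := fun h => lt_irrefl a (ha a h)
    have h1a : 1 ≤ a := hK a (mem_insert_self a s)
    have hKs : ∀ i ∈ s, 1 ≤ i := fun i hi => hK i (mem_insert_of_mem hi)
    obtain ⟨hrest_int, hrest_ge⟩ := ih hKs (fun i hi => hmeas i (mem_insert_of_mem hi))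
      (fun i hi => hbd i (mem_insert_of_mem hi)) (fun i hi => hce i (mem_insert_of_mem hi))
    set rest : Ω → ℝ := fun ω => ∏ i ∈ s, g i ω with hrest_def
    have hrest_sm : StronglyMeasurable[ℱ (a - 1)] rest :=
      stmt9_prod_sm ℱ g s (a - 1) (fun i hi => hmeas i (mem_insert_of_mem hi))
        (fun i hi => Nat.le_sub_one_of_lt (ha i hi))
    have hrest_bd : ∀ᵐ ω ∂μ, 0 ≤ rest ω ∧ rest ω ≤ C ^ s.card :=
      stmt9_prod_bdd g C s (fun i hi => hbd i (mem_insert_of_mem hi))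
    have hga_int : Integrable (g a) μ :=
      stmt9_int_of_bdd (((hmeas a (mem_insert_self a s)).mono (ℱ.le a)).aestronglyMeasurable)
        (hbd a (mem_insert_self a s))
    have hprod : (fun ω => ∏ i ∈ insert a s, g i ω) = rest * g a := by
      funext ω
      simp only [Finset.prod_insert ha', Pi.mul_apply, hrest_def]
      ring
    have hfull_bd : ∀ᵐ ω ∂μ, 0 ≤ ∏ i ∈ insert a s, g i ω ∧
        ∏ i ∈ insert a s, g i ω ≤ C ^ (insert a s).card :=
      stmt9_prod_bdd g C _ hbd
    have hfull_sm : StronglyMeasurable[ℱ a] (fun ω => ∏ i ∈ insert a s, g i ω) :=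
      stmt9_prod_sm ℱ g _ a hmeas (fun i hi => by
        rcases Finset.mem_insert.1 hi with h | h
        · exact h.le
        · exact (ha i h).le)
    have hfull_int : Integrable (fun ω => ∏ i ∈ insert a s, g i ω) μ :=
      stmt9_int_of_bdd ((hfull_sm.mono (ℱ.le a)).aestronglyMeasurable) hfull_bd
    have hfg_int : Integrable (rest * g a) μ := hprod ▸ hfull_int
    have hpull : μ[rest * g a | ℱ (a - 1)] =ᵐ[μ] rest * μ[g a | ℱ (a - 1)] :=
      condExp_mul_of_stronglyMeasurable_left hrest_sm hfg_int hga_int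
    have hcond_int : Integrable (rest * μ[g a | ℱ (a - 1)]) μ :=
      (integrable_condExp (f := rest * g a) (m := ℱ (a - 1))).congr hpull
    have hmono : ∫ ω, rest ω ∂μ ≤ ∫ ω, (rest * μ[g a | ℱ (a - 1)]) ω ∂μ := by
      refine integral_mono_ae hrest_int hcond_int ?_
      filter_upwards [hrest_bd, hce a (mem_insert_self a s)] with ω h1 h2
      exact le_mul_of_one_le_right h1.1 h2
    refine ⟨hfull_int, ?_⟩
    have hint_eq : ∫ ω, ∏ i ∈ insert a s, g i ω ∂μ
        = ∫ ω, (rest * μ[g a | ℱ (a - 1)]) ω ∂μ := by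
      rw [hprod, ← integral_condExp (ℱ.le (a - 1)) (f := rest * g a)]
      exact integral_congr_ae hpull
    rw [hint_eq]
    exact le_trans hrest_ge hmono

/-- Main induction lemma: equality version. -/
private lemma stmt9_key_eq (ℱ : Filtration ℕ m0) (g : ℕ → Ω → ℝ) (C : ℝ) :
    ∀ K : Finset ℕ, (∀ i ∈ K, 1 ≤ i) →
    (∀ i ∈ K, StronglyMeasurable[ℱ i] (g i)) →
    (∀ i ∈ K, ∀ᵐ ω ∂μ, 0 ≤ g i ω ∧ g i ω ≤ C) →
    (∀ i ∈ K, μ[g i | ℱ (i - 1)] =ᵐ[μ] fun _ => 1) →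
    Integrable (fun ω => ∏ i ∈ K, g i ω) μ ∧ ∫ ω, ∏ i ∈ K, g i ω ∂μ = 1 := by
  intro K
  induction K using Finset.induction_on_max with
  | empty =>
    intro _ _ _ _
    simp
  | insert a s ha ih =>
    intro hK hmeas hbd hce
    have ha' : a ∉ s := fun h => lt_irrefl a (ha a h)
    have hKs : ∀ i ∈ s, 1 ≤ i := fun i hi => hK i (mem_insert_of_mem hi)
    obtain ⟨hrest_int, hrest_eq⟩ := ih hKs (fun i hi => hmeas i (mem_insert_of_mem hi))
      (fun i hi => hbd i (mem_insert_of_mem hi)) (fun i hi => hce i (mem_insert_of_mem hi))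
    set rest : Ω → ℝ := fun ω => ∏ i ∈ s, g i ω with hrest_def
    have hrest_sm : StronglyMeasurable[ℱ (a - 1)] rest :=
      stmt9_prod_sm ℱ g s (a - 1) (fun i hi => hmeas i (mem_insert_of_mem hi))
        (fun i hi => Nat.le_sub_one_of_lt (ha i hi))
    have hga_int : Integrable (g a) μ :=
      stmt9_int_of_bdd (((hmeas a (mem_insert_self a s)).mono (ℱ.le a)).aestronglyMeasurable)
        (hbd a (mem_insert_self a s))
    have hprod : (fun ω => ∏ i ∈ insert a s, g i ω) = rest * g a := by
      funext ω
      simp only [Finset.prod_insert ha', Pi.mul_apply, hrest_def]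
      ring
    have hfull_bd : ∀ᵐ ω ∂μ, 0 ≤ ∏ i ∈ insert a s, g i ω ∧
        ∏ i ∈ insert a s, g i ω ≤ C ^ (insert a s).card :=
      stmt9_prod_bdd g C _ hbd
    have hfull_sm : StronglyMeasurable[ℱ a] (fun ω => ∏ i ∈ insert a s, g i ω) :=
      stmt9_prod_sm ℱ g _ a hmeas (fun i hi => by
        rcases Finset.mem_insert.1 hi with h | h
        · exact h.le
        · exact (ha i h).le)
    have hfull_int : Integrable (fun ω => ∏ i ∈ insert a s, g i ω) μ :=
      stmt9_int_of_bdd ((hfull_sm.mono (ℱ.le a)).aestronglyMeasurable) hfull_bd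
    have hfg_int : Integrable (rest * g a) μ := hprod ▸ hfull_int
    have hpull : μ[rest * g a | ℱ (a - 1)] =ᵐ[μ] rest * μ[g a | ℱ (a - 1)] :=
      condExp_mul_of_stronglyMeasurable_left hrest_sm hfg_int hga_int
    have hpull' : μ[rest * g a | ℱ (a - 1)] =ᵐ[μ] rest := by
      refine hpull.trans ?_
      filter_upwards [hce a (mem_insert_self a s)] with ω hω
      simp [hω]
    refine ⟨hfull_int, ?_⟩
    have hint_eq : ∫ ω, ∏ i ∈ insert a s, g i ω ∂μ = ∫ ω, rest ω ∂μ := by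
      rw [hprod, ← integral_condExp (ℱ.le (a - 1)) (f := rest * g a)]
      exact integral_congr_ae hpull'
    rw [hint_eq]
    exact hrest_eq

end Stmt9Aux

theorem stmt9 {Ω : Type*} {m0 : MeasurableSpace Ω} {μ : Measure Ω}
    [IsProbabilityMeasure μ] (ℱ : Filtration ℕ m0)
    (c : ℝ) (hc0 : 0 < c) (hc1 : c ≤ 1)
    (H p : ℕ → Ω → ℝ)
    (hHmeas : ∀ i, 1 ≤ i → Measurable[ℱ i] (H i))
    (hH01 : ∀ i, 1 ≤ i → ∀ ω, H i ω = 0 ∨ H i ω = 1)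
    (hpmeas : ∀ i, 1 ≤ i → Measurable[ℱ (i - 1)] (p i))
    (hpb : ∀ i, 1 ≤ i → ∀ᵐ ω ∂μ, c ≤ p i ω ∧ p i ω ≤ 1)
    (hcond : ∀ i, 1 ≤ i → μ[H i | ℱ (i - 1)] =ᵐ[μ] p i)
    (J J' : Finset ℕ) (hJ1 : ∀ i ∈ J, 1 ≤ i) (hJ'1 : ∀ i ∈ J', 1 ≤ i) :
    0 ≤ ∫ ω, ((∏ i ∈ J, H i ω / p i ω) - ∫ ω', ∏ i ∈ J, H i ω' / p i ω' ∂μ)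
        * ((∏ i ∈ J', H i ω / p i ω) - ∫ ω', ∏ i ∈ J', H i ω' / p i ω' ∂μ) ∂μ := by
  classical
  set f : ℕ → Ω → ℝ := fun i ω => H i ω / p i ω with hf_def
  set q : ℕ → Ω → ℝ := fun i ω => if i ∈ J ∩ J' then H i ω / (p i ω) ^ 2 else H i ω / p i ω
    with hq_def
  -- measurability of f i
  have hf_sm : ∀ i, 1 ≤ i → StronglyMeasurable[ℱ i] (f i) := by
    intro i hi
    exact ((hHmeas i hi).div ((hpmeas i hi).mono (ℱ.mono (Nat.sub_le i 1)) le_rfl)).stronglyMeasurable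
  have hq_sm : ∀ i, 1 ≤ i → StronglyMeasurable[ℱ i] (q i) := by
    intro i hi
    have hpm : Measurable[ℱ i] (p i) := (hpmeas i hi).mono (ℱ.mono (Nat.sub_le i 1)) le_rfl
    by_cases h : i ∈ J ∩ J'
    · simp only [hq_def, h, if_true]
      exact ((hHmeas i hi).div (hpm.pow_const 2)).stronglyMeasurable
    · simp only [hq_def, h, if_false]
      exact ((hHmeas i hi).div hpm).stronglyMeasurable
  -- bounds
  have hf_bd : ∀ i, 1 ≤ i → ∀ᵐ ω ∂μ, 0 ≤ f i ω ∧ f i ω ≤ 1 / c := by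
    intro i hi
    filter_upwards [hpb i hi] with ω hω
    rcases hH01 i hi ω with h | h
    · simp only [hf_def, h, zero_div]
      exact ⟨le_rfl, by positivity⟩
    · simp only [hf_def, h]
      constructor
      · exact (one_div_pos.2 (lt_of_lt_of_le hc0 hω.1)).le
      · exact one_div_le_one_div_of_le hc0 hω.1
  have hq_bd : ∀ i, 1 ≤ i → ∀ᵐ ω ∂μ, 0 ≤ q i ω ∧ q i ω ≤ 1 / c ^ 2 := by
    intro i hi
    filter_upwards [hpb i hi] with ω hω
    have hpω : 0 < p i ω := lt_of_lt_of_le hc0 hω.1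
    by_cases h : i ∈ J ∩ J'
    · simp only [hq_def, h, if_true]
      rcases hH01 i hi ω with h0 | h0
      · simp only [h0, zero_div]
        exact ⟨le_rfl, by positivity⟩
      · simp only [h0]
        constructor
        · positivity
        · exact one_div_le_one_div_of_le (pow_pos hc0 2) (pow_le_pow_left₀ hc0.le hω.1 2)
    · simp only [hq_def, h, if_false]
      rcases hH01 i hi ω with h0 | h0
      · simp only [h0, zero_div]
        exact ⟨le_rfl, by positivity⟩
      · simp only [h0]
        constructor
        · positivity
        · calc 1 / p i ω ≤ 1 / c := one_div_le_one_div_of_le hc0 hω.1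
            _ ≤ 1 / c ^ 2 := by
              apply one_div_le_one_div_of_le (by positivity)
              nlinarith
  -- integrability of H i
  have hH_int : ∀ i, 1 ≤ i → Integrable (H i) μ := by
    intro i hi
    refine stmt9_int_of_bdd (D := 1) (((hHmeas i hi).mono (ℱ.le i) le_rfl).aestronglyMeasurable) ?_
    filter_upwards with ω
    rcases hH01 i hi ω with h | h <;> simp [h]
  -- conditional expectation of f i is 1
  have hf_ce : ∀ i, 1 ≤ i → μ[f i | ℱ (i - 1)] =ᵐ[μ] fun _ => 1 := by
    intro i hi
    have hsm : StronglyMeasurable[ℱ (i - 1)] (fun ω => (p i ω)⁻¹) :=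
      ((hpmeas i hi).inv).stronglyMeasurable
    have heq : f i = (fun ω => (p i ω)⁻¹) * H i := by
      funext ω
      simp [hf_def, div_eq_inv_mul]
    have hig : Integrable ((fun ω => (p i ω)⁻¹) * H i) μ := by
      rw [← heq]
      exact stmt9_int_of_bdd (((hf_sm i hi).mono (ℱ.le i)).aestronglyMeasurable) (hf_bd i hi)
    have hpull := condExp_mul_of_stronglyMeasurable_left hsm hig (hH_int i hi)
    rw [heq]
    refine hpull.trans ?_
    filter_upwards [hcond i hi, hpb i hi] with ω h1 h2
    have hp0 : p i ω ≠ 0 := ne_of_gt (lt_of_lt_of_le hc0 h2.1)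
    simp [h1, inv_mul_cancel₀ hp0]
  -- conditional expectation of q i is ≥ 1
  have hq_ce : ∀ i, 1 ≤ i → ∀ᵐ ω ∂μ, 1 ≤ (μ[q i | ℱ (i - 1)]) ω := by
    intro i hi
    by_cases h : i ∈ J ∩ J'
    · have hsm : StronglyMeasurable[ℱ (i - 1)] (fun ω => ((p i ω) ^ 2)⁻¹) :=
        (((hpmeas i hi).pow_const 2).inv).stronglyMeasurable
      have heq : q i = (fun ω => ((p i ω) ^ 2)⁻¹) * H i := by
        funext ω
        simp only [hq_def, Pi.mul_apply]
        rw [if_pos h, div_eq_mul_inv, mul_comm]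
      have hig : Integrable ((fun ω => ((p i ω) ^ 2)⁻¹) * H i) μ := by
        rw [← heq]
        exact stmt9_int_of_bdd (((hq_sm i hi).mono (ℱ.le i)).aestronglyMeasurable) (hq_bd i hi)
      have hpull := condExp_mul_of_stronglyMeasurable_left hsm hig (hH_int i hi)
      have : μ[q i | ℱ (i - 1)] =ᵐ[μ] fun ω => (p i ω)⁻¹ := by
        rw [heq]
        refine hpull.trans ?_
        filter_upwards [hcond i hi, hpb i hi] with ω h1 h2
        have hp0 : p i ω ≠ 0 := ne_of_gt (lt_of_lt_of_le hc0 h2.1)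
        simp only [Pi.mul_apply, h1]
        field_simp
      filter_upwards [this, hpb i hi] with ω h1 h2
      rw [h1]
      exact (one_le_inv₀ (lt_of_lt_of_le hc0 h2.1)).2 h2.2
    · have heq : q i = f i := by
        funext ω
        simp only [hq_def, hf_def]
        rw [if_neg h]
      rw [heq]
      filter_upwards [hf_ce i hi] with ω hω
      rw [hω]
  -- the three integrals
  have hJe := stmt9_key_eq ℱ f (1 / c) J hJ1 (fun i hi => hf_sm i (hJ1 i hi))
    (fun i hi => hf_bd i (hJ1 i hi)) (fun i hi => hf_ce i (hJ1 i hi))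
  have hJ'e := stmt9_key_eq ℱ f (1 / c) J' hJ'1 (fun i hi => hf_sm i (hJ'1 i hi))
    (fun i hi => hf_bd i (hJ'1 i hi)) (fun i hi => hf_ce i (hJ'1 i hi))
  have hU1 : ∀ i ∈ J ∪ J', 1 ≤ i := by
    intro i hi
    rcases Finset.mem_union.1 hi with h | h
    · exact hJ1 i h
    · exact hJ'1 i h
  have hQ := stmt9_key ℱ q (1 / c ^ 2) (J ∪ J') hU1 (fun i hi => hq_sm i (hU1 i hi))
    (fun i hi => hq_bd i (hU1 i hi)) (fun i hi => hq_ce i (hU1 i hi))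
  -- pointwise identity: prod over union of q = X * Y
  have hXY : ∀ ω, (∏ i ∈ J, f i ω) * (∏ i ∈ J', f i ω) = ∏ i ∈ J ∪ J', q i ω := by
    intro ω
    have h1 : ∀ i ∈ J ∪ J', q i ω = f i ω * (if i ∈ J ∩ J' then f i ω else 1) := by
      intro i hi
      by_cases h : i ∈ J ∩ J'
      · simp only [hq_def, hf_def]
        rw [if_pos h, if_pos h, div_mul_div_comm]
        rcases hH01 i (hU1 i hi) ω with h0 | h0 <;> rw [h0] <;> ring_nf
      · simp only [hq_def, hf_def]
        rw [if_neg h, if_neg h, mul_one]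
    rw [Finset.prod_congr rfl h1, Finset.prod_mul_distrib, Finset.prod_ite_mem,
      Finset.inter_eq_right.2 ((Finset.inter_subset_left).trans Finset.subset_union_left),
      ← Finset.prod_union_inter]
  -- assemble
  obtain ⟨hXint, hXval⟩ := hJe
  obtain ⟨hYint, hYval⟩ := hJ'e
  obtain ⟨hQint, hQval⟩ := hQ
  set X : Ω → ℝ := fun ω => ∏ i ∈ J, f i ω with hX_def
  set Y : Ω → ℝ := fun ω => ∏ i ∈ J', f i ω with hY_def
  have hXYint : Integrable (fun ω => X ω * Y ω) μ := by
    refine hQint.congr ?_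
    filter_upwards with ω
    exact (hXY ω).symm
  have hXYval : 1 ≤ ∫ ω, X ω * Y ω ∂μ := by
    rw [integral_congr_ae (g := fun ω => ∏ i ∈ J ∪ J', q i ω)]
    · exact hQval
    · filter_upwards with ω
      exact hXY ω
  have key : ∫ ω, (X ω - ∫ ω', X ω' ∂μ) * (Y ω - ∫ ω', Y ω' ∂μ) ∂μ
      = ∫ ω, X ω * Y ω ∂μ - (∫ ω', X ω' ∂μ) * ∫ ω', Y ω' ∂μ := by
    set a := ∫ ω', X ω' ∂μ
    set b := ∫ ω', Y ω' ∂μ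
    have hexp : (fun ω => (X ω - a) * (Y ω - b))
        = fun ω => X ω * Y ω - (b * X ω + a * Y ω) + a * b := by
      funext ω; ring
    have hbX : Integrable (fun ω => b * X ω) μ := hXint.const_mul b
    have haY : Integrable (fun ω => a * Y ω) μ := hYint.const_mul a
    have hsum : Integrable (fun ω => b * X ω + a * Y ω) μ := hbX.add haY
    have hsub : Integrable (fun ω => X ω * Y ω - (b * X ω + a * Y ω)) μ := hXYint.sub hsum
    rw [hexp, integral_add hsub (integrable_const (a * b)),
      integral_sub hXYint hsum, integral_add hbX haY,
      integral_const_mul, integral_const_mul, integral_const]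
    simp only [measure_univ, ENNReal.toReal_one, probReal_univ, smul_eq_mul, one_mul, mul_one]
    ring
  calc (0:ℝ) ≤ ∫ ω, X ω * Y ω ∂μ - (∫ ω', X ω' ∂μ) * ∫ ω', Y ω' ∂μ := by
        rw [hXval, hYval]; linarith
    _ = ∫ ω, (X ω - ∫ ω', X ω' ∂μ) * (Y ω - ∫ ω', Y ω' ∂μ) ∂μ := key.symm
end

section
/- For any finite set of indices J, the random variable Ŝ(J) · (Ŝ(J) − 1) is an unbiased estimator of the variance of Ŝ(J); that is, E[Ŝ(J) · (Ŝ(J) − 1)] = Var(Ŝ(J)). -/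
open MeasureTheory Finset

theorem stmt10 {Ω : Type*} {m0 : MeasurableSpace Ω} {μ : Measure Ω}
    [IsProbabilityMeasure μ] (ℱ : Filtration ℕ m0)
    (c : ℝ) (hc0 : 0 < c) (hc1 : c ≤ 1)
    (H p : ℕ → Ω → ℝ)
    (hHmeas : ∀ i, 1 ≤ i → Measurable[ℱ i] (H i))
    (hH01 : ∀ i, 1 ≤ i → ∀ ω, H i ω = 0 ∨ H i ω = 1)
    (hpmeas : ∀ i, 1 ≤ i → Measurable[ℱ (i - 1)] (p i))
    (hpb : ∀ i, 1 ≤ i → ∀ᵐ ω ∂μ, c ≤ p i ω ∧ p i ω ≤ 1)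
    (hcond : ∀ i, 1 ≤ i → μ[H i | ℱ (i - 1)] =ᵐ[μ] p i)
    (J : Finset ℕ) (hJ1 : ∀ i ∈ J, 1 ≤ i) :
    ∫ ω, (∏ i ∈ J, H i ω / p i ω) * ((∏ i ∈ J, H i ω / p i ω) - 1) ∂μ
      = ∫ ω, ((∏ i ∈ J, H i ω / p i ω) - ∫ ω', ∏ i ∈ J, H i ω' / p i ω' ∂μ) ^ 2 ∂μ := by
  classical
  -- measurability of the product
  have hSmeas : ∀ (K : Finset ℕ), (∀ i ∈ K, 1 ≤ i) →
      Measurable (fun ω => ∏ i ∈ K, H i ω / p i ω) := by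
    intro K hK
    apply Finset.measurable_prod
    intro i hi
    exact ((hHmeas i (hK i hi)).mono (ℱ.le i) le_rfl).div
      ((hpmeas i (hK i hi)).mono (ℱ.le (i - 1)) le_rfl)
  -- a.e. bound of the product
  have hSbound : ∀ (K : Finset ℕ), (∀ i ∈ K, 1 ≤ i) →
      ∀ᵐ ω ∂μ, 0 ≤ (∏ i ∈ K, H i ω / p i ω) ∧
        (∏ i ∈ K, H i ω / p i ω) ≤ (1 / c) ^ K.card := by
    intro K hK
    have hall : ∀ᵐ ω ∂μ, ∀ i ∈ K, c ≤ p i ω ∧ p i ω ≤ 1 :=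
      (ae_ball_iff K.countable_toSet).2 fun i hi => hpb i (hK i hi)
    filter_upwards [hall] with ω hω
    have hterm : ∀ i ∈ K, 0 ≤ H i ω / p i ω ∧ H i ω / p i ω ≤ 1 / c := by
      intro i hi
      obtain ⟨hc, h1⟩ := hω i hi
      have hp0 : 0 < p i ω := lt_of_lt_of_le hc0 hc
      rcases hH01 i (hK i hi) ω with h0 | h1'
      · simp [h0, le_of_lt hc0]
      · constructor
        · exact div_nonneg (by rw [h1']; norm_num) hp0.le
        · rw [h1']
          exact one_div_le_one_div_of_le hc0 hc
    constructor
    · exact Finset.prod_nonneg fun i hi => (hterm i hi).1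
    · rw [← Finset.prod_const]
      exact Finset.prod_le_prod (fun i hi => (hterm i hi).1) fun i hi => (hterm i hi).2
  -- integrability helper
  have hint : ∀ (f : Ω → ℝ) (B : ℝ), Measurable f → (∀ᵐ ω ∂μ, |f ω| ≤ B) →
      Integrable f μ := by
    intro f B hf hb
    exact Integrable.mono' (integrable_const B) hf.aestronglyMeasurable
      (by filter_upwards [hb] with ω h using by simpa using h)
  have hSint : ∀ (K : Finset ℕ), (∀ i ∈ K, 1 ≤ i) →
      Integrable (fun ω => ∏ i ∈ K, H i ω / p i ω) μ := by
    intro K hK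
    refine hint _ ((1 / c) ^ K.card) (hSmeas K hK) ?_
    filter_upwards [hSbound K hK] with ω ⟨h0, h1⟩ using abs_le.2 ⟨by linarith, h1⟩
  -- the key unbiasedness: E[∏] = 1
  have key : ∀ (n : ℕ) (K : Finset ℕ), K ⊆ Finset.range n → (∀ i ∈ K, 1 ≤ i) →
      ∫ ω, ∏ i ∈ K, H i ω / p i ω ∂μ = 1 := by
    intro n
    induction n with
    | zero =>
      intro K hKsub _
      have : K = ∅ := Finset.subset_empty.1 (by simpa using hKsub)
      simp [this]
    | succ n ih =>
      intro K hKsub hK1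
      by_cases hn : n ∈ K
      · have hn1 : 1 ≤ n := hK1 n hn
        set K' := K.erase n with hK'
        have hK'sub : K' ⊆ Finset.range n := by
          intro i hi
          have hiK := Finset.mem_of_mem_erase hi
          have := hKsub hiK
          rw [Finset.mem_range] at this ⊢
          exact lt_of_le_of_ne (Nat.lt_succ_iff.1 this) (Finset.ne_of_mem_erase hi)
        have hK'1 : ∀ i ∈ K', 1 ≤ i := fun i hi => hK1 i (Finset.mem_of_mem_erase hi)
        set f := fun ω => ∏ i ∈ K', H i ω / p i ω with hf
        set g := fun ω => H n ω / p n ω with hg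
        have hsplit : ∀ ω, (∏ i ∈ K, H i ω / p i ω) = f ω * g ω := by
          intro ω; rw [hf, hg]; exact (Finset.prod_erase_mul K _ hn).symm
        -- f is ℱ (n-1)-strongly measurable
        have hfsm : StronglyMeasurable[ℱ (n - 1)] f := by
          apply Measurable.stronglyMeasurable
          apply Finset.measurable_prod
          intro i hi
          have hin : i ≤ n - 1 := Nat.le_sub_one_of_lt (Finset.mem_range.1 (hK'sub hi))
          exact ((hHmeas i (hK'1 i hi)).mono (ℱ.mono hin) le_rfl).div
            ((hpmeas i (hK'1 i hi)).mono (ℱ.mono (le_trans (Nat.sub_le i 1) hin)) le_rfl)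
        have hgmeas : Measurable g := by
          have := hSmeas {n} (by simpa using hn1)
          simpa [hg] using this
        have hgbound : ∀ᵐ ω ∂μ, |g ω| ≤ 1 / c := by
          have := hSbound {n} (by simpa using hn1)
          filter_upwards [this] with ω hω
          simp only [Finset.prod_singleton, Finset.card_singleton, pow_one] at hω
          exact abs_le.2 ⟨by linarith [hω.1], hω.2⟩
        have hgint : Integrable g μ := hint _ _ hgmeas hgbound
        have hfgint : Integrable (f * g) μ := by
          have := hSint K hK1
          apply this.congr
          filter_upwards with ω using (hsplit ω)
        -- conditional expectation of g is 1
        have hcge : μ[g | ℱ (n - 1)] =ᵐ[μ] fun _ => 1 := by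
          have hginv : g = (fun ω => (p n ω)⁻¹) * H n := by
            funext ω; simp [hg, div_eq_inv_mul]
          have hpinv_sm : StronglyMeasurable[ℱ (n - 1)] (fun ω => (p n ω)⁻¹) :=
            ((hpmeas n hn1).inv).stronglyMeasurable
          have hHint : Integrable (H n) μ := by
            refine hint _ 1 ((hHmeas n hn1).mono (ℱ.le n) le_rfl) ?_
            filter_upwards with ω
            rcases hH01 n hn1 ω with h | h <;> simp [h]
          have hmulint : Integrable ((fun ω => (p n ω)⁻¹) * H n) μ := by
            rw [← hginv]; exact hgint
          have hpull := condExp_mul_of_stronglyMeasurable_left hpinv_sm hmulint hHint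
          rw [hginv]
          refine hpull.trans ?_
          filter_upwards [hcond n hn1, hpb n hn1] with ω h1 h2
          have hp0 : p n ω ≠ 0 := ne_of_gt (lt_of_lt_of_le hc0 h2.1)
          simp only [Pi.mul_apply, h1]
          field_simp
        calc ∫ ω, ∏ i ∈ K, H i ω / p i ω ∂μ
            = ∫ ω, (f * g) ω ∂μ := by
              refine integral_congr_ae ?_
              filter_upwards with ω using hsplit ω
          _ = ∫ ω, (μ[f * g | ℱ (n - 1)]) ω ∂μ := (integral_condExp (ℱ.le _)).symm
          _ = ∫ ω, f ω * (μ[g | ℱ (n - 1)]) ω ∂μ := by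
              refine integral_congr_ae ?_
              exact condExp_mul_of_stronglyMeasurable_left hfsm hfgint hgint
          _ = ∫ ω, f ω ∂μ := by
              refine integral_congr_ae ?_
              filter_upwards [hcge] with ω hω
              rw [hω]; ring
          _ = 1 := ih K' hK'sub hK'1
      · exact ih K (fun i hi => by
          have := Finset.mem_range.1 (hKsub hi)
          exact Finset.mem_range.2 (lt_of_le_of_ne (Nat.lt_succ_iff.1 this)
            (fun h => hn (h ▸ hi)))) hK1
  -- apply key to J
  obtain ⟨n, hn⟩ : ∃ n, J ⊆ Finset.range n := ⟨(J.sup id) + 1, fun i hi =>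
    Finset.mem_range.2 (Nat.lt_succ_of_le (Finset.le_sup (f := id) hi))⟩
  have hEJ : ∫ ω', ∏ i ∈ J, H i ω' / p i ω' ∂μ = 1 := key n J hn hJ1
  rw [hEJ]
  set S := fun ω => ∏ i ∈ J, H i ω / p i ω with hS
  set B := (1 / c) ^ J.card with hB
  have hB0 : 0 ≤ B := pow_nonneg (by positivity) _
  have hSb : ∀ᵐ ω ∂μ, |S ω| ≤ B := by
    filter_upwards [hSbound J hJ1] with ω ⟨h0, h1⟩ using abs_le.2 ⟨by linarith, h1⟩
  have hSm : Measurable S := hSmeas J hJ1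
  have h1 : Integrable (fun ω => S ω * (S ω - 1)) μ := by
    refine hint _ (B * (B + 1)) (hSm.mul (hSm.sub measurable_const)) ?_
    filter_upwards [hSb] with ω hω
    rw [abs_mul]
    have h2 : |S ω - 1| ≤ B + 1 := (abs_sub _ _).trans (by simp; linarith)
    exact mul_le_mul hω h2 (abs_nonneg _) hB0
  have h2 : Integrable (fun ω => (S ω - 1) ^ 2) μ := by
    refine hint _ ((B + 1) ^ 2) ((hSm.sub measurable_const).pow_const 2) ?_
    filter_upwards [hSb] with ω hω
    rw [abs_pow]
    have h2 : |S ω - 1| ≤ B + 1 := (abs_sub _ _).trans (by simp; linarith)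
    exact pow_le_pow_left₀ (abs_nonneg _) h2 2
  have hdiff : ∫ ω, (S ω - 1) ^ 2 ∂μ - ∫ ω, S ω * (S ω - 1) ∂μ = 0 := by
    rw [← integral_sub h2 h1]
    have : ∀ ω, (S ω - 1) ^ 2 - S ω * (S ω - 1) = 1 - S ω := by intro ω; ring
    simp_rw [this]
    rw [integral_sub (integrable_const 1) (hSint J hJ1)]
    rw [integral_const, measureReal_def, measure_univ, ENNReal.toReal_one, one_smul, hEJ, sub_self]
  linarith
end

section
/- Let Q be a finite collection of finite sets of indices and f : Q → ℝ a weight function. Then the subgraph-sum estimator f̂(Q) = ∑_{J∈Q} f(J) · Ŝ(J) is unbiased for f(Q) = ∑_{J∈Q} f(J); that is, E[ ∑_{J∈Q} f(J) · Ŝ(J) ] = ∑_{J∈Q} f(J). -/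
open MeasureTheory Finset

private lemma stmt11_key {Ω : Type*} {m0 : MeasurableSpace Ω} {μ : Measure Ω}
    [IsProbabilityMeasure μ] (ℱ : Filtration ℕ m0)
    (c : ℝ) (hc0 : 0 < c)
    (H p : ℕ → Ω → ℝ)
    (hHmeas : ∀ i, 1 ≤ i → Measurable[ℱ i] (H i))
    (hH01 : ∀ i, 1 ≤ i → ∀ ω, H i ω = 0 ∨ H i ω = 1)
    (hpmeas : ∀ i, 1 ≤ i → Measurable[ℱ (i - 1)] (p i))
    (hpb : ∀ i, 1 ≤ i → ∀ᵐ ω ∂μ, c ≤ p i ω ∧ p i ω ≤ 1)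
    (hcond : ∀ i, 1 ≤ i → μ[H i | ℱ (i - 1)] =ᵐ[μ] p i) :
    ∀ n (J : Finset ℕ), (∀ i ∈ J, 1 ≤ i ∧ i ≤ n) →
      Integrable (fun ω => ∏ i ∈ J, H i ω / p i ω) μ ∧
      ∫ ω, ∏ i ∈ J, H i ω / p i ω ∂μ = 1 := by
  classical
  -- a.e. bounds on p, all i simultaneously
  have hae : ∀ᵐ ω ∂μ, ∀ i, 1 ≤ i → c ≤ p i ω ∧ p i ω ≤ 1 := by
    rw [MeasureTheory.ae_all_iff]
    intro i
    by_cases hi : 1 ≤ i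
    · filter_upwards [hpb i hi] with ω hw _ using hw
    · filter_upwards with ω h; exact absurd h hi
  -- factor measurability
  have hfmeas : ∀ i, 1 ≤ i → Measurable[ℱ i] (fun ω => H i ω / p i ω) := by
    intro i hi
    exact (hHmeas i hi).div ((hpmeas i hi).mono (ℱ.mono (Nat.sub_le i 1)) le_rfl)
  have hprodmeas : ∀ n (J : Finset ℕ), (∀ i ∈ J, 1 ≤ i ∧ i ≤ n) →
      Measurable[ℱ n] (fun ω => ∏ i ∈ J, H i ω / p i ω) := by
    intro n J hJ
    apply Finset.measurable_prod
    intro i hi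
    exact ((hfmeas i (hJ i hi).1).mono (ℱ.mono (hJ i hi).2) le_rfl)
  -- a.e. pointwise bound on factors
  have hfb : ∀ᵐ ω ∂μ, ∀ i, 1 ≤ i → 0 ≤ H i ω / p i ω ∧ H i ω / p i ω ≤ c⁻¹ := by
    filter_upwards [hae] with ω hw i hi
    have hp := hw i hi
    have hp0 : 0 < p i ω := lt_of_lt_of_le hc0 hp.1
    rcases hH01 i hi ω with h0 | h1
    · rw [h0, zero_div]
      exact ⟨le_rfl, inv_nonneg.2 hc0.le⟩
    · rw [h1]
      constructor
      · positivity
      · rw [one_div]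
        exact inv_anti₀ hc0 hp.1
  -- a.e. bound on products
  have hpb2 : ∀ n (J : Finset ℕ), (∀ i ∈ J, 1 ≤ i ∧ i ≤ n) →
      ∀ᵐ ω ∂μ, ‖∏ i ∈ J, H i ω / p i ω‖ ≤ c⁻¹ ^ J.card := by
    intro n J hJ
    filter_upwards [hfb] with ω hw
    have h1 : ∀ i ∈ J, 0 ≤ H i ω / p i ω := fun i hi => (hw i (hJ i hi).1).1
    rw [Real.norm_eq_abs, abs_of_nonneg (Finset.prod_nonneg h1)]
    calc ∏ i ∈ J, H i ω / p i ω ≤ ∏ _i ∈ J, c⁻¹ :=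
          Finset.prod_le_prod h1 (fun i hi => (hw i (hJ i hi).1).2)
      _ = c⁻¹ ^ J.card := by rw [Finset.prod_const]
  have hint : ∀ n (J : Finset ℕ), (∀ i ∈ J, 1 ≤ i ∧ i ≤ n) →
      Integrable (fun ω => ∏ i ∈ J, H i ω / p i ω) μ := by
    intro n J hJ
    exact Integrable.mono' (integrable_const (c⁻¹ ^ J.card))
      ((hprodmeas n J hJ).mono (ℱ.le n) le_rfl).aestronglyMeasurable (hpb2 n J hJ)
  -- main induction
  intro n
  induction n with
  | zero =>
    intro J hJ
    have hJ0 : J = ∅ := by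
      rw [Finset.eq_empty_iff_forall_notMem]
      intro i hi
      have := hJ i hi
      omega
    subst hJ0
    simp
  | succ n ih =>
    intro J hJ
    refine ⟨hint (n+1) J hJ, ?_⟩
    by_cases hmem : (n+1) ∈ J
    · -- split off the top factor
      set J' := J.erase (n+1) with hJ'def
      have hJ' : ∀ i ∈ J', 1 ≤ i ∧ i ≤ n := by
        intro i hi
        have h1 := Finset.ne_of_mem_erase hi
        have h2 := hJ i (Finset.mem_of_mem_erase hi)
        omega
      set g : Ω → ℝ := fun ω => ∏ i ∈ J', H i ω / p i ω with hgdef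
      set F : Ω → ℝ := fun ω => g ω * (p (n+1) ω)⁻¹ with hFdef
      have hpm : Measurable[ℱ n] (p (n+1)) := by
        have := hpmeas (n+1) (by omega)
        simpa using this
      have hFmeas : StronglyMeasurable[ℱ n] F :=
        ((hprodmeas n J' hJ').mul hpm.inv).stronglyMeasurable
      have hHint : Integrable (H (n+1)) μ := by
        refine Integrable.mono' (integrable_const 1)
          ((hHmeas (n+1) (by omega)).mono (ℱ.le (n+1)) le_rfl).aestronglyMeasurable ?_
        filter_upwards with ω
        rcases hH01 (n+1) (by omega) ω with h | h <;> simp [h]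
      have heq : (fun ω => ∏ i ∈ J, H i ω / p i ω) = fun ω => F ω * H (n+1) ω := by
        funext ω
        rw [← Finset.mul_prod_erase J _ hmem]
        simp only [hFdef, hgdef]
        field_simp
        ring
      have hFHint : Integrable (F * H (n+1)) μ := by
        have := hint (n+1) J hJ
        rw [heq] at this
        exact this
      have hcond' : μ[H (n+1) | ℱ n] =ᵐ[μ] p (n+1) := by
        have := hcond (n+1) (by omega)
        simpa using this
      have hFH : μ[F * H (n+1) | ℱ n] =ᵐ[μ] F * μ[H (n+1) | ℱ n] :=
        condExp_mul_of_stronglyMeasurable_left hFmeas hFHint hHint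
      have step1 : ∫ ω, ∏ i ∈ J, H i ω / p i ω ∂μ = ∫ ω, (μ[F * H (n+1) | ℱ n]) ω ∂μ := by
        rw [integral_condExp (ℱ.le n)]
        rw [heq]
        rfl
      rw [step1, integral_congr_ae hFH]
      have step2 : (F * μ[H (n+1) | ℱ n]) =ᵐ[μ] g := by
        filter_upwards [hcond', hae] with ω h1 h2
        have hp0 : p (n+1) ω ≠ 0 := by
          exact (lt_of_lt_of_le hc0 (h2 (n+1) (by omega)).1).ne'
        simp only [Pi.mul_apply, h1, hFdef]
        field_simp
      rw [integral_congr_ae step2]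
      exact (ih J' hJ').2
    · -- n+1 not in J: all elements ≤ n
      have hJn : ∀ i ∈ J, 1 ≤ i ∧ i ≤ n := by
        intro i hi
        have := hJ i hi
        have : i ≠ n + 1 := fun h => hmem (h ▸ hi)
        omega
      exact (ih J hJn).2

theorem stmt11 {Ω : Type*} {m0 : MeasurableSpace Ω} {μ : Measure Ω}
    [IsProbabilityMeasure μ] (ℱ : Filtration ℕ m0)
    (c : ℝ) (hc0 : 0 < c) (hc1 : c ≤ 1)
    (H p : ℕ → Ω → ℝ)
    (hHmeas : ∀ i, 1 ≤ i → Measurable[ℱ i] (H i))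
    (hH01 : ∀ i, 1 ≤ i → ∀ ω, H i ω = 0 ∨ H i ω = 1)
    (hpmeas : ∀ i, 1 ≤ i → Measurable[ℱ (i - 1)] (p i))
    (hpb : ∀ i, 1 ≤ i → ∀ᵐ ω ∂μ, c ≤ p i ω ∧ p i ω ≤ 1)
    (hcond : ∀ i, 1 ≤ i → μ[H i | ℱ (i - 1)] =ᵐ[μ] p i)
    (Q : Finset (Finset ℕ)) (hQ1 : ∀ J ∈ Q, ∀ i ∈ J, 1 ≤ i)
    (f : Finset ℕ → ℝ) :
    ∫ ω, ∑ J ∈ Q, f J * ∏ i ∈ J, H i ω / p i ω ∂μ = ∑ J ∈ Q, f J := by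
  classical
  have key := stmt11_key ℱ c hc0 H p hHmeas hH01 hpmeas hpb hcond
  set n := Q.sup (fun J => J.sup id) with hn
  have hbound : ∀ J ∈ Q, ∀ i ∈ J, 1 ≤ i ∧ i ≤ n := by
    intro J hJ i hi
    refine ⟨hQ1 J hJ i hi, ?_⟩
    calc i = id i := rfl
      _ ≤ J.sup id := Finset.le_sup hi
      _ ≤ n := Finset.le_sup hJ
  rw [integral_finset_sum]
  · apply Finset.sum_congr rfl
    intro J hJ
    rw [integral_const_mul, (key n J (hbound J hJ)).2, mul_one]
  · intro J hJ
    exact ((key n J (hbound J hJ)).1).const_mul (f J)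
end

section
/- Let Q be a finite collection of finite sets of indices and f : Q → ℝ a weight function, and let f̂(Q) = ∑_{J∈Q} f(J) · Ŝ(J). Then the random variable ∑_{J, J' ∈ Q, J ∩ J' ≠ ∅} f(J) f(J') · Ŝ(J ∪ J') · (Ŝ(J ∩ J') − 1) is an unbiased estimator of Var(f̂(Q)); that is, its expectation equals Var(∑_{J∈Q} f(J) · Ŝ(J)). -/
open MeasureTheory Finset


section aux
variable {Ω : Type*} {m0 : MeasurableSpace Ω} {μ : Measure Ω}
    [IsProbabilityMeasure μ] {ℱ : Filtration ℕ m0}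
    {c : ℝ} {H p : ℕ → Ω → ℝ}

lemma aux_meas (hHmeas : ∀ i, 1 ≤ i → Measurable[ℱ i] (H i))
    (hpmeas : ∀ i, 1 ≤ i → Measurable[ℱ (i - 1)] (p i))
    (K : Finset ℕ) (hK : ∀ i ∈ K, 1 ≤ i) (n : ℕ) (hn : ∀ i ∈ K, i ≤ n) :
    Measurable[ℱ n] (fun ω => ∏ i ∈ K, H i ω / p i ω) := by
  apply Finset.measurable_prod
  intro i hi
  exact ((hHmeas i (hK i hi)).mono (ℱ.mono (hn i hi)) le_rfl).div
    ((hpmeas i (hK i hi)).mono (ℱ.mono ((Nat.sub_le i 1).trans (hn i hi))) le_rfl)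

lemma aux_meas0 (hHmeas : ∀ i, 1 ≤ i → Measurable[ℱ i] (H i))
    (hpmeas : ∀ i, 1 ≤ i → Measurable[ℱ (i - 1)] (p i))
    (K : Finset ℕ) (hK : ∀ i ∈ K, 1 ≤ i) :
    Measurable (fun ω => ∏ i ∈ K, H i ω / p i ω) :=
  (aux_meas hHmeas hpmeas K hK (K.sup id) (fun i hi => Finset.le_sup (f := id) hi)).mono
    (ℱ.le _) le_rfl

lemma aux_bound (hc0 : 0 < c)
    (hH01 : ∀ i, 1 ≤ i → ∀ ω, H i ω = 0 ∨ H i ω = 1)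
    (hpb : ∀ i, 1 ≤ i → ∀ᵐ ω ∂μ, c ≤ p i ω ∧ p i ω ≤ 1)
    (K : Finset ℕ) (hK : ∀ i ∈ K, 1 ≤ i) :
    ∀ᵐ ω ∂μ, |∏ i ∈ K, H i ω / p i ω| ≤ (1/c) ^ K.card := by
  have h : ∀ᵐ ω ∂μ, ∀ i ∈ K, c ≤ p i ω ∧ p i ω ≤ 1 :=
    (ae_ball_iff K.countable_toSet).2 fun i hi => hpb i (hK i hi)
  filter_upwards [h] with ω hω
  calc |∏ i ∈ K, H i ω / p i ω| = ∏ i ∈ K, |H i ω / p i ω| := by rw [Finset.abs_prod]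
  _ ≤ ∏ _i ∈ K, (1/c) := by
      refine Finset.prod_le_prod (fun i _ => abs_nonneg _) (fun i hi => ?_)
      rcases hH01 i (hK i hi) ω with h0 | h1
      · rw [h0, zero_div, abs_zero]; positivity
      · rw [h1, abs_div, abs_one, abs_of_pos (lt_of_lt_of_le hc0 (hω i hi).1)]
        exact one_div_le_one_div_of_le hc0 (hω i hi).1
  _ = (1/c) ^ K.card := by rw [Finset.prod_const]

lemma aux_int (hc0 : 0 < c)
    (hHmeas : ∀ i, 1 ≤ i → Measurable[ℱ i] (H i))
    (hH01 : ∀ i, 1 ≤ i → ∀ ω, H i ω = 0 ∨ H i ω = 1)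
    (hpmeas : ∀ i, 1 ≤ i → Measurable[ℱ (i - 1)] (p i))
    (hpb : ∀ i, 1 ≤ i → ∀ᵐ ω ∂μ, c ≤ p i ω ∧ p i ω ≤ 1)
    (K : Finset ℕ) (hK : ∀ i ∈ K, 1 ≤ i) :
    Integrable (fun ω => ∏ i ∈ K, H i ω / p i ω) μ := by
  refine Integrable.mono' (integrable_const ((1/c) ^ K.card))
    (aux_meas0 hHmeas hpmeas K hK).aestronglyMeasurable ?_
  filter_upwards [aux_bound hc0 hH01 hpb K hK] with ω hω
  rwa [Real.norm_eq_abs]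

lemma aux_int2 (hc0 : 0 < c)
    (hHmeas : ∀ i, 1 ≤ i → Measurable[ℱ i] (H i))
    (hH01 : ∀ i, 1 ≤ i → ∀ ω, H i ω = 0 ∨ H i ω = 1)
    (hpmeas : ∀ i, 1 ≤ i → Measurable[ℱ (i - 1)] (p i))
    (hpb : ∀ i, 1 ≤ i → ∀ᵐ ω ∂μ, c ≤ p i ω ∧ p i ω ≤ 1)
    (K L : Finset ℕ) (hK : ∀ i ∈ K, 1 ≤ i) (hL : ∀ i ∈ L, 1 ≤ i) :
    Integrable (fun ω => (∏ i ∈ K, H i ω / p i ω) * ∏ i ∈ L, H i ω / p i ω) μ := by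
  refine Integrable.mono' (integrable_const ((1/c) ^ K.card * (1/c) ^ L.card))
    ((aux_meas0 hHmeas hpmeas K hK).mul (aux_meas0 hHmeas hpmeas L hL)).aestronglyMeasurable ?_
  filter_upwards [aux_bound hc0 hH01 hpb K hK, aux_bound hc0 hH01 hpb L hL] with ω h1 h2
  rw [Real.norm_eq_abs, abs_mul]
  exact mul_le_mul h1 h2 (abs_nonneg _) (by positivity)

lemma aux_E1 (hc0 : 0 < c)
    (hHmeas : ∀ i, 1 ≤ i → Measurable[ℱ i] (H i))
    (hH01 : ∀ i, 1 ≤ i → ∀ ω, H i ω = 0 ∨ H i ω = 1)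
    (hpmeas : ∀ i, 1 ≤ i → Measurable[ℱ (i - 1)] (p i))
    (hpb : ∀ i, 1 ≤ i → ∀ᵐ ω ∂μ, c ≤ p i ω ∧ p i ω ≤ 1)
    (hcond : ∀ i, 1 ≤ i → μ[H i | ℱ (i - 1)] =ᵐ[μ] p i) :
    ∀ K : Finset ℕ, (∀ i ∈ K, 1 ≤ i) → ∫ ω, ∏ i ∈ K, H i ω / p i ω ∂μ = 1 := by
  intro K
  induction K using Finset.strongInduction with
  | _ K ih =>
    intro hK
    rcases K.eq_empty_or_nonempty with rfl | hne
    · simp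
    set m := K.max' hne with hmdef
    have hmK : m ∈ K := K.max'_mem hne
    have hm1 : 1 ≤ m := hK m hmK
    have hsub : K.erase m ⊂ K := Finset.erase_ssubset hmK
    have hKe : ∀ i ∈ K.erase m, 1 ≤ i := fun i hi => hK i (Finset.mem_of_mem_erase hi)
    have hle : ∀ i ∈ K.erase m, i ≤ m - 1 := by
      intro i hi
      have h1 : i ≤ m := K.le_max' i (Finset.mem_of_mem_erase hi)
      have h2 : i ≠ m := Finset.ne_of_mem_erase hi
      omega
    set g : Ω → ℝ := fun ω => (∏ i ∈ K.erase m, H i ω / p i ω) / p m ω with hg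
    have hgmeas : StronglyMeasurable[ℱ (m-1)] g :=
      ((aux_meas hHmeas hpmeas _ hKe (m-1) hle).div (hpmeas m hm1)).stronglyMeasurable
    have hsplit : ∀ ω, ∏ i ∈ K, H i ω / p i ω = g ω * H m ω := by
      intro ω
      rw [← Finset.prod_erase_mul K _ hmK, hg]
      ring
    -- integrability
    have hintK : Integrable (fun ω => ∏ i ∈ K, H i ω / p i ω) μ :=
      aux_int hc0 hHmeas hH01 hpmeas hpb K hK
    have hintgH : Integrable (g * H m) μ :=
      hintK.congr (Filter.Eventually.of_forall hsplit)
    have hHm0 : Measurable (H m) := (hHmeas m hm1).mono (ℱ.le m) le_rfl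
    have hintH : Integrable (H m) μ := by
      refine Integrable.mono' (integrable_const 1) hHm0.aestronglyMeasurable ?_
      refine Filter.Eventually.of_forall fun ω => ?_
      rcases hH01 m hm1 ω with h | h <;> simp [h]
    have step1 : ∫ ω, ∏ i ∈ K, H i ω / p i ω ∂μ = ∫ ω, (g * H m) ω ∂μ :=
      integral_congr_ae (Filter.Eventually.of_forall hsplit)
    have step2 : ∫ ω, (g * H m) ω ∂μ = ∫ ω, (μ[g * H m | ℱ (m-1)]) ω ∂μ :=
      (integral_condExp (ℱ.le (m-1))).symm
    have hmul : μ[g * H m | ℱ (m-1)] =ᵐ[μ] g * μ[H m | ℱ (m-1)] :=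
      condExp_mul_of_stronglyMeasurable_left hgmeas hintgH hintH
    have step3 : ∫ ω, (μ[g * H m | ℱ (m-1)]) ω ∂μ
        = ∫ ω, g ω * p m ω ∂μ := by
      refine integral_congr_ae ?_
      filter_upwards [hmul, hcond m hm1] with ω h1 h2
      rw [h1]; simp only [Pi.mul_apply]; rw [h2]
    have step4 : ∫ ω, g ω * p m ω ∂μ = ∫ ω, ∏ i ∈ K.erase m, H i ω / p i ω ∂μ := by
      refine integral_congr_ae ?_
      filter_upwards [hpb m hm1] with ω hω
      have hpm : p m ω ≠ 0 := ne_of_gt (lt_of_lt_of_le hc0 hω.1)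
      rw [hg]
      field_simp
    rw [step1, step2, step3, step4, ih _ hsub hKe]
end aux
theorem stmt12 {Ω : Type*} {m0 : MeasurableSpace Ω} {μ : Measure Ω}
    [IsProbabilityMeasure μ] (ℱ : Filtration ℕ m0)
    (c : ℝ) (hc0 : 0 < c) (hc1 : c ≤ 1)
    (H p : ℕ → Ω → ℝ)
    (hHmeas : ∀ i, 1 ≤ i → Measurable[ℱ i] (H i))
    (hH01 : ∀ i, 1 ≤ i → ∀ ω, H i ω = 0 ∨ H i ω = 1)
    (hpmeas : ∀ i, 1 ≤ i → Measurable[ℱ (i - 1)] (p i))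
    (hpb : ∀ i, 1 ≤ i → ∀ᵐ ω ∂μ, c ≤ p i ω ∧ p i ω ≤ 1)
    (hcond : ∀ i, 1 ≤ i → μ[H i | ℱ (i - 1)] =ᵐ[μ] p i)
    (Q : Finset (Finset ℕ)) (hQ1 : ∀ J ∈ Q, ∀ i ∈ J, 1 ≤ i)
    (f : Finset ℕ → ℝ) :
    ∫ ω, ∑ J ∈ Q, ∑ J' ∈ Q,
        (if (J ∩ J').Nonempty then
          f J * f J' * ((∏ i ∈ J ∪ J', H i ω / p i ω)
            * ((∏ i ∈ J ∩ J', H i ω / p i ω) - 1))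
        else 0) ∂μ
      = ∫ ω, ((∑ J ∈ Q, f J * ∏ i ∈ J, H i ω / p i ω)
          - ∫ ω', ∑ J ∈ Q, f J * ∏ i ∈ J, H i ω' / p i ω' ∂μ) ^ 2 ∂μ := by
  set S : Finset ℕ → Ω → ℝ := fun J ω => ∏ i ∈ J, H i ω / p i ω with hS
  have hE1 := aux_E1 hc0 hHmeas hH01 hpmeas hpb hcond
  have hint : ∀ K : Finset ℕ, (∀ i ∈ K, 1 ≤ i) → Integrable (S K) μ :=
    fun K hK => aux_int hc0 hHmeas hH01 hpmeas hpb K hK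
  have hint2 : ∀ K L : Finset ℕ, (∀ i ∈ K, 1 ≤ i) → (∀ i ∈ L, 1 ≤ i) →
      Integrable (fun ω => S K ω * S L ω) μ :=
    fun K L hK hL => aux_int2 hc0 hHmeas hH01 hpmeas hpb K L hK hL
  have hU : ∀ J ∈ Q, ∀ J' ∈ Q, ∀ i ∈ J ∪ J', 1 ≤ i := by
    intro J hJ J' hJ' i hi
    rcases Finset.mem_union.1 hi with h | h
    exacts [hQ1 J hJ i h, hQ1 J' hJ' i h]
  have hI : ∀ J ∈ Q, ∀ J' ∈ Q, ∀ i ∈ J ∩ J', 1 ≤ i := by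
    intro J hJ J' hJ' i hi
    exact hQ1 J hJ i (Finset.mem_inter.1 hi).1
  -- integrability of each LHS term
  have hterm_int : ∀ J ∈ Q, ∀ J' ∈ Q, Integrable (fun ω =>
      if (J ∩ J').Nonempty then f J * f J' * (S (J ∪ J') ω * (S (J ∩ J') ω - 1)) else 0) μ := by
    intro J hJ J' hJ'
    split_ifs with h
    · refine Integrable.const_mul ?_ (f J * f J')
      refine ((hint2 _ _ (hU J hJ J' hJ') (hI J hJ J' hJ')).sub
        (hint _ (hU J hJ J' hJ'))).congr (Filter.Eventually.of_forall fun ω => ?_)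
      simp only [Pi.sub_apply]
      ring
    · exact integrable_const 0
  -- value of each LHS term
  have hterm : ∀ J ∈ Q, ∀ J' ∈ Q,
      (∫ ω, (if (J ∩ J').Nonempty then
        f J * f J' * (S (J ∪ J') ω * (S (J ∩ J') ω - 1)) else 0) ∂μ)
      = f J * f J' * ((∫ ω, S J ω * S J' ω ∂μ) - 1) := by
    intro J hJ J' hJ'
    have hprodeq : ∀ ω, S (J ∪ J') ω * S (J ∩ J') ω = S J ω * S J' ω := by
      intro ω; exact Finset.prod_union_inter
    split_ifs with h
    · have e1 : ∀ ω, f J * f J' * (S (J ∪ J') ω * (S (J ∩ J') ω - 1))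
          = f J * f J' * (S J ω * S J' ω - S (J ∪ J') ω) := by
        intro ω; rw [mul_sub, mul_one, hprodeq]
      rw [integral_congr_ae (Filter.Eventually.of_forall e1), integral_const_mul,
        integral_sub (hint2 J J' (hQ1 J hJ) (hQ1 J' hJ')) (hint _ (hU J hJ J' hJ')),
        hE1 _ (hU J hJ J' hJ')]
    · rw [Finset.not_nonempty_iff_eq_empty] at h
      have hdisj : Disjoint J J' := Finset.disjoint_iff_inter_eq_empty.2 h
      have : (∫ ω, S J ω * S J' ω ∂μ) = 1 := by
        have e2 : ∀ ω, S J ω * S J' ω = S (J ∪ J') ω := by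
          intro ω; exact (Finset.prod_union hdisj).symm
        rw [integral_congr_ae (Filter.Eventually.of_forall e2), hE1 _ (hU J hJ J' hJ')]
      rw [this]
      simp
  -- LHS
  have hLHS : ∫ ω, ∑ J ∈ Q, ∑ J' ∈ Q,
      (if (J ∩ J').Nonempty then
        f J * f J' * (S (J ∪ J') ω * (S (J ∩ J') ω - 1)) else 0) ∂μ
      = ∑ J ∈ Q, ∑ J' ∈ Q, f J * f J' * ((∫ ω, S J ω * S J' ω ∂μ) - 1) := by
    rw [integral_finset_sum Q (fun J hJ =>
      integrable_finset_sum Q (fun J' hJ' => hterm_int J hJ J' hJ'))]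
    refine Finset.sum_congr rfl fun J hJ => ?_
    rw [integral_finset_sum Q (fun J' hJ' => hterm_int J hJ J' hJ')]
    exact Finset.sum_congr rfl fun J' hJ' => hterm J hJ J' hJ'
  -- RHS
  set X : Ω → ℝ := fun ω => ∑ J ∈ Q, f J * S J ω with hXdef
  have hXint : Integrable X μ :=
    integrable_finset_sum Q fun J hJ => (hint J (hQ1 J hJ)).const_mul (f J)
  have hEX : ∫ ω, X ω ∂μ = ∑ J ∈ Q, f J := by
    rw [integral_finset_sum Q (fun J hJ => (hint J (hQ1 J hJ)).const_mul (f J))]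
    exact Finset.sum_congr rfl fun J hJ => by
      rw [integral_const_mul, hE1 J (hQ1 J hJ), mul_one]
  set EX : ℝ := ∫ ω, X ω ∂μ with hEXdef
  have hXXeq : ∀ ω, X ω * X ω
      = ∑ J ∈ Q, ∑ J' ∈ Q, f J * f J' * (S J ω * S J' ω) := by
    intro ω
    rw [hXdef, Finset.sum_mul_sum]
    exact Finset.sum_congr rfl fun J _ => Finset.sum_congr rfl fun J' _ => by ring
  have hXXint : Integrable (fun ω => X ω * X ω) μ := by
    refine (integrable_finset_sum Q fun J hJ => integrable_finset_sum Q fun J' hJ' =>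
      (hint2 J J' (hQ1 J hJ) (hQ1 J' hJ')).const_mul (f J * f J')).congr
      (Filter.Eventually.of_forall fun ω => (hXXeq ω).symm)
  have hIXX : ∫ ω, X ω * X ω ∂μ
      = ∑ J ∈ Q, ∑ J' ∈ Q, f J * f J' * ∫ ω, S J ω * S J' ω ∂μ := by
    rw [integral_congr_ae (Filter.Eventually.of_forall hXXeq),
      integral_finset_sum Q (fun J hJ => integrable_finset_sum Q fun J' hJ' =>
        (hint2 J J' (hQ1 J hJ) (hQ1 J' hJ')).const_mul (f J * f J'))]
    refine Finset.sum_congr rfl fun J hJ => ?_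
    rw [integral_finset_sum Q (fun J' hJ' =>
      (hint2 J J' (hQ1 J hJ) (hQ1 J' hJ')).const_mul (f J * f J'))]
    exact Finset.sum_congr rfl fun J' hJ' => integral_const_mul _ _
  have hRHS : ∫ ω, (X ω - EX) ^ 2 ∂μ
      = (∑ J ∈ Q, ∑ J' ∈ Q, f J * f J' * ∫ ω, S J ω * S J' ω ∂μ) - EX * EX := by
    have expand : ∀ ω, (X ω - EX) ^ 2 = X ω * X ω - (2 * EX) * X ω + EX * EX :=
      fun ω => by ring
    have h1 : Integrable (fun ω => X ω * X ω - 2 * EX * X ω) μ :=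
      hXXint.sub (hXint.const_mul (2 * EX))
    rw [integral_congr_ae (Filter.Eventually.of_forall expand),
      integral_add (f := fun a => X a * X a - 2 * EX * X a) (g := fun _ => EX * EX)
        h1 (integrable_const _),
      integral_sub (f := fun a => X a * X a) (g := fun a => 2 * EX * X a)
        hXXint (hXint.const_mul (2 * EX)),
      integral_const_mul, integral_const, hIXX]
    simp only [measure_univ, probReal_univ, ENNReal.toReal_one, one_smul, smul_eq_mul]
    rw [← hEXdef]
    ring
  rw [hLHS, hRHS, hEX, Finset.sum_mul_sum, ← Finset.sum_sub_distrib]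
  refine Finset.sum_congr rfl fun J hJ => ?_
  rw [← Finset.sum_sub_distrib]
  exact Finset.sum_congr rfl fun J' hJ' => by ring
end

section
/- Let J be a nonempty finite set of indices and define the node-selection estimator n̂ = 1 − ∏_{i∈J} (1 − Ŝ_i). Then E[n̂] = 1, and for every ω ∈ Ω with H_i(ω) = 0 for all i ∈ J one has n̂(ω) = 0. -/
open MeasureTheory Finset

theorem stmt14 {Ω : Type*} {m0 : MeasurableSpace Ω} {μ : Measure Ω}
    [IsProbabilityMeasure μ] (ℱ : Filtration ℕ m0)
    (c : ℝ) (hc0 : 0 < c) (hc1 : c ≤ 1)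
    (H p : ℕ → Ω → ℝ)
    (hHmeas : ∀ i, 1 ≤ i → Measurable[ℱ i] (H i))
    (hH01 : ∀ i, 1 ≤ i → ∀ ω, H i ω = 0 ∨ H i ω = 1)
    (hpmeas : ∀ i, 1 ≤ i → Measurable[ℱ (i - 1)] (p i))
    (hpb : ∀ i, 1 ≤ i → ∀ᵐ ω ∂μ, c ≤ p i ω ∧ p i ω ≤ 1)
    (hcond : ∀ i, 1 ≤ i → μ[H i | ℱ (i - 1)] =ᵐ[μ] p i)
    (J : Finset ℕ) (hJne : J.Nonempty) (hJ1 : ∀ i ∈ J, 1 ≤ i) :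
    (∫ ω, (1 - ∏ i ∈ J, (1 - H i ω / p i ω)) ∂μ = 1) ∧
      (∀ ω, (∀ i ∈ J, H i ω = 0) → 1 - ∏ i ∈ J, (1 - H i ω / p i ω) = 0) := by
  have hc0' : (0:ℝ) < 1 / c := by positivity
  -- measurability of each factor at level ℱ i
  have hfacmeas : ∀ i, 1 ≤ i → Measurable[ℱ i] (fun ω => 1 - H i ω / p i ω) := by
    intro i hi
    exact measurable_const.sub
      ((hHmeas i hi).div (((hpmeas i hi).mono (ℱ.mono (Nat.sub_le i 1)) le_rfl)))
  -- a.e. bound on each factor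
  have hfacbdd : ∀ i, 1 ≤ i → ∀ᵐ ω ∂μ, |1 - H i ω / p i ω| ≤ 1 / c := by
    intro i hi
    filter_upwards [hpb i hi] with ω ⟨hcp, hp1⟩
    have hpos : 0 < p i ω := lt_of_lt_of_le hc0 hcp
    rcases hH01 i hi ω with h0 | h1
    · rw [h0, zero_div, sub_zero, abs_one]
      rw [le_div_iff₀ hc0]; linarith
    · rw [h1]
      have h1p : 1 / p i ω ≤ 1 / c := by
        apply one_div_le_one_div_of_le hc0 hcp
      have hge : (1:ℝ) ≤ 1 / p i ω := by
        rw [le_div_iff₀ hpos]; linarith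
      rw [abs_le]
      constructor <;> linarith [hc0'.le]
  -- integrability of products of factors
  have hprodint : ∀ K : Finset ℕ, (∀ i ∈ K, 1 ≤ i) →
      Integrable (fun ω => ∏ i ∈ K, (1 - H i ω / p i ω)) μ := by
    intro K hK
    refine ⟨(Finset.measurable_prod K fun i hi =>
        ((hfacmeas i (hK i hi)).mono (ℱ.le i) le_rfl)).aestronglyMeasurable, ?_⟩
    apply HasFiniteIntegral.of_bounded (C := (1/c) ^ K.card)
    have := (ae_ball_iff K.countable_toSet).2 (fun i hi => hfacbdd i (hK i hi))
    filter_upwards [this] with ω hω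
    rw [Real.norm_eq_abs, Finset.abs_prod]
    calc ∏ i ∈ K, |1 - H i ω / p i ω| ≤ ∏ i ∈ K, (1/c) :=
          Finset.prod_le_prod (fun i _ => abs_nonneg _) (fun i hi => hω i hi)
      _ = (1/c) ^ K.card := by rw [Finset.prod_const]
  -- main claim: integral of product over J is 0
  set j := J.max' hJne with hj
  have hjJ : j ∈ J := J.max'_mem hJne
  have hj1 : 1 ≤ j := hJ1 j hjJ
  set m := ℱ (j - 1) with hm
  have hmle : m ≤ m0 := ℱ.le _
  set J' := J.erase j with hJ'
  have hJ'1 : ∀ i ∈ J', 1 ≤ i := fun i hi => hJ1 i (Finset.mem_of_mem_erase hi)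
  have hJ'le : ∀ i ∈ J', i ≤ j - 1 := by
    intro i hi
    have hlt : i < j := lt_of_le_of_ne (J.le_max' i (Finset.mem_of_mem_erase hi))
      (Finset.ne_of_mem_erase hi)
    omega
  set f : Ω → ℝ := fun ω => ∏ i ∈ J', (1 - H i ω / p i ω) with hf
  set g : Ω → ℝ := fun ω => 1 - H j ω / p j ω with hg
  have hfmeas : StronglyMeasurable[m] f := by
    apply Measurable.stronglyMeasurable
    exact Finset.measurable_prod J' fun i hi =>
      (hfacmeas i (hJ'1 i hi)).mono (ℱ.mono (hJ'le i hi)) le_rfl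
  have hfgint : Integrable (f * g) μ := by
    have := hprodint J hJ1
    have heq : (fun ω => ∏ i ∈ J, (1 - H i ω / p i ω)) = f * g := by
      funext ω
      simp only [hf, hg, Pi.mul_apply]
      exact ((Finset.mul_prod_erase J (fun i => 1 - H i ω / p i ω) hjJ).symm.trans (mul_comm _ _))
    rwa [heq] at this
  have hgint : Integrable g μ := by
    have := hprodint {j} (by simpa using hj1)
    simpa [hg] using this
  -- conditional expectation of H j / p j given m is 1 a.e.
  have hHint : Integrable (H j) μ := by
    refine ⟨((hHmeas j hj1).mono (ℱ.le j) le_rfl).aestronglyMeasurable, ?_⟩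
    apply HasFiniteIntegral.of_bounded (C := 1)
    filter_upwards with ω
    rcases hH01 j hj1 ω with h|h <;> simp [h]
  have hpinvHint : Integrable ((fun ω => (p j ω)⁻¹) * H j) μ := by
    refine ⟨((((hpmeas j hj1).mono hmle le_rfl).inv).mul
      ((hHmeas j hj1).mono (ℱ.le j) le_rfl)).aestronglyMeasurable, ?_⟩
    apply HasFiniteIntegral.of_bounded (C := 1/c)
    filter_upwards [hpb j hj1] with ω ⟨hcp, hp1⟩
    have hpos : 0 < p j ω := lt_of_lt_of_le hc0 hcp
    rcases hH01 j hj1 ω with h|h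
    · simp [h]; positivity
    · simp only [Pi.mul_apply, h, mul_one, Real.norm_eq_abs,
        abs_of_pos (inv_pos.2 hpos)]
      rw [one_div]
      exact inv_anti₀ hc0 hcp
  have hcexp1 : μ[(fun ω => (p j ω)⁻¹) * H j | m] =ᵐ[μ]
      (fun ω => (p j ω)⁻¹) * μ[H j | m] :=
    condExp_mul_of_stronglyMeasurable_left ((hpmeas j hj1).inv.stronglyMeasurable)
      hpinvHint hHint
  have hcexpg : μ[g | m] =ᵐ[μ] 0 := by
    have hgeq : g = (fun _ => (1:ℝ)) - (fun ω => (p j ω)⁻¹) * H j := by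
      funext ω
      simp [hg, div_eq_mul_inv, mul_comm]
    rw [hgeq]
    have hsub := condExp_sub (μ := μ) (m := m)
      (integrable_const (1:ℝ)) hpinvHint
    refine hsub.trans ?_
    have h1 : μ[(fun _ => (1:ℝ)) | m] = fun _ => (1:ℝ) := condExp_const (μ := μ) hmle 1
    filter_upwards [hcexp1, hcond j hj1, hpb j hj1] with ω hω2 hω3 hω4
    have hpos : 0 < p j ω := lt_of_lt_of_le hc0 hω4.1
    simp only [Pi.sub_apply, Pi.mul_apply, h1, Pi.zero_apply] at *
    rw [hω2, hω3]
    field_simp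
    simp
  have hintprod : ∫ ω, ∏ i ∈ J, (1 - H i ω / p i ω) ∂μ = 0 := by
    have heq : (fun ω => ∏ i ∈ J, (1 - H i ω / p i ω)) = f * g := by
      funext ω
      simp only [hf, hg, Pi.mul_apply]
      exact ((Finset.mul_prod_erase J (fun i => 1 - H i ω / p i ω) hjJ).symm.trans (mul_comm _ _))
    rw [heq]
    rw [← integral_condExp (f := f * g) hmle]
    have hmul := condExp_mul_of_stronglyMeasurable_left hfmeas hfgint hgint
    have hzero : μ[f * g | m] =ᵐ[μ] 0 := by
      refine hmul.trans ?_
      filter_upwards [hcexpg] with ω hω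
      simp [hω]
    rw [integral_congr_ae hzero]
    simp
  constructor
  · rw [integral_sub (integrable_const 1) (hprodint J hJ1), hintprod]
    simp
  · intro ω hω
    have : ∏ i ∈ J, (1 - H i ω / p i ω) = 1 :=
      Finset.prod_eq_one fun i hi => by rw [hω i hi, zero_div, sub_zero]
    rw [this]; ring
end

section
/- For any m ≥ 1, the random variable ∑_{i=1}^{m} (H_i / p_i) · (1/p_i − 1) is an unbiased estimator of the variance of the edge-count estimator N̂_K = ∑_{i=1}^{m} H_i / p_i; that is, E[ ∑_{i=1}^{m} (H_i / p_i)(1/p_i − 1) ] = Var( ∑_{i=1}^{m} H_i / p_i ). -/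
open MeasureTheory Finset

/-- Pull-out key lemma: for a bounded `m`-measurable `g` and a bounded `h` with
`μ[h|m] =ᵐ q`, we have `∫ g·h = ∫ g·q`. -/
lemma stmt16_key {Ω : Type*} {m m0 : MeasurableSpace Ω} (hm : m ≤ m0) {μ : Measure Ω}
    [IsProbabilityMeasure μ] {h q g : Ω → ℝ}
    (hh : Measurable h) (hh1 : ∀ ω, |h ω| ≤ 1)
    (hg : Measurable[m] g) {C : ℝ} (hgC : ∀ᵐ ω ∂μ, |g ω| ≤ C)
    (hcond : μ[h | m] =ᵐ[μ] q) :
    ∫ ω, g ω * h ω ∂μ = ∫ ω, g ω * q ω ∂μ := by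
  have hgm0 : Measurable g := hg.mono hm le_rfl
  have hh_int : Integrable h μ :=
    (integrable_const (1 : ℝ)).mono' hh.aestronglyMeasurable
      (Filter.Eventually.of_forall fun ω => by simpa [Real.norm_eq_abs] using hh1 ω)
  have hgh_int : Integrable (g * h) μ :=
    (integrable_const C).mono' (hgm0.mul hh).aestronglyMeasurable
      (by filter_upwards [hgC] with ω hC'
          calc ‖g ω * h ω‖ = |g ω| * |h ω| := by rw [Real.norm_eq_abs, abs_mul]
          _ ≤ C * 1 := mul_le_mul hC' (hh1 ω) (abs_nonneg _) ((abs_nonneg _).trans hC')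
          _ = C := mul_one C)
  have hmul : (fun ω => g ω * h ω) = g * h := rfl
  rw [hmul, ← integral_condExp hm (f := g * h)]
  refine integral_congr_ae ?_
  refine ((condExp_mul_of_stronglyMeasurable_left hg.stronglyMeasurable hgh_int hh_int).trans ?_)
  filter_upwards [hcond] with ω hω
  simp only [Pi.mul_apply, hω]

theorem stmt16 {Ω : Type*} {m0 : MeasurableSpace Ω} {μ : Measure Ω}
    [IsProbabilityMeasure μ] (ℱ : Filtration ℕ m0)
    (c : ℝ) (hc0 : 0 < c) (hc1 : c ≤ 1)
    (H p : ℕ → Ω → ℝ)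
    (hHmeas : ∀ i, 1 ≤ i → Measurable[ℱ i] (H i))
    (hH01 : ∀ i, 1 ≤ i → ∀ ω, H i ω = 0 ∨ H i ω = 1)
    (hpmeas : ∀ i, 1 ≤ i → Measurable[ℱ (i - 1)] (p i))
    (hpb : ∀ i, 1 ≤ i → ∀ᵐ ω ∂μ, c ≤ p i ω ∧ p i ω ≤ 1)
    (hcond : ∀ i, 1 ≤ i → μ[H i | ℱ (i - 1)] =ᵐ[μ] p i)
    (m : ℕ) (hm : 1 ≤ m) :
    ∫ ω, ∑ i ∈ Finset.Icc 1 m, (H i ω / p i ω) * (1 / p i ω - 1) ∂μ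
      = ∫ ω, ((∑ i ∈ Finset.Icc 1 m, H i ω / p i ω)
          - ∫ ω', ∑ i ∈ Finset.Icc 1 m, H i ω' / p i ω' ∂μ) ^ 2 ∂μ := by
  -- basic measurabilities
  have hHm : ∀ i, 1 ≤ i → Measurable (H i) := fun i hi => (hHmeas i hi).mono (ℱ.le i) le_rfl
  have hpm : ∀ i, 1 ≤ i → Measurable (p i) := fun i hi => (hpmeas i hi).mono (ℱ.le _) le_rfl
  have hXm : ∀ i, 1 ≤ i → Measurable (fun ω => H i ω / p i ω) :=
    fun i hi => (hHm i hi).div (hpm i hi)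
  have hH1 : ∀ i, 1 ≤ i → ∀ ω, |H i ω| ≤ 1 := by
    intro i hi ω; rcases hH01 i hi ω with h | h <;> rw [h] <;> norm_num
  -- integrability from a.e. boundedness
  have hInt : ∀ {f : Ω → ℝ}, Measurable f → ∀ (C : ℝ), (∀ᵐ ω ∂μ, |f ω| ≤ C) →
      Integrable f μ := by
    intro f hf C hC
    exact (integrable_const C).mono' hf.aestronglyMeasurable
      (hC.mono fun ω h => by simpa [Real.norm_eq_abs] using h)
  -- a.e. bound on X i
  have hXbd : ∀ i, 1 ≤ i → ∀ᵐ ω ∂μ, |H i ω / p i ω| ≤ 1 / c := by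
    intro i hi
    filter_upwards [hpb i hi] with ω hω
    have hp0 : 0 < p i ω := lt_of_lt_of_le hc0 hω.1
    rcases hH01 i hi ω with h | h <;> rw [h]
    · simp; positivity
    · rw [abs_of_pos (by positivity)]
      exact one_div_le_one_div_of_le hc0 hω.1
  -- the pull-out equality specialized to index i
  have keyi : ∀ i, 1 ≤ i → ∀ (g : Ω → ℝ), Measurable[ℱ (i - 1)] g → ∀ (C : ℝ),
      (∀ᵐ ω ∂μ, |g ω| ≤ C) →
      ∫ ω, g ω * H i ω ∂μ = ∫ ω, g ω * p i ω ∂μ := by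
    intro i hi g hg C hC
    exact stmt16_key (ℱ.le _) ((hHmeas i hi).mono (ℱ.le i) le_rfl) (hH1 i hi) hg hC (hcond i hi)
  -- (1) unbiasedness: ∫ X i = 1
  have hEX : ∀ i, 1 ≤ i → ∫ ω, H i ω / p i ω ∂μ = 1 := by
    intro i hi
    have h1 : ∫ ω, H i ω / p i ω ∂μ = ∫ ω, (p i ω)⁻¹ * H i ω ∂μ := by
      refine integral_congr_ae (Filter.Eventually.of_forall fun ω => ?_); ring
    have h2 := keyi i hi (fun ω => (p i ω)⁻¹) (hpmeas i hi).inv (1 / c) ?_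
    · rw [h1, h2]
      have h3 : (fun ω => (p i ω)⁻¹ * p i ω) =ᵐ[μ] fun _ => (1 : ℝ) := by
        filter_upwards [hpb i hi] with ω hω
        have : p i ω ≠ 0 := ne_of_gt (lt_of_lt_of_le hc0 hω.1)
        field_simp
      rw [integral_congr_ae h3, integral_const]
      simp
    · filter_upwards [hpb i hi] with ω hω
      have hp0 : 0 < p i ω := lt_of_lt_of_le hc0 hω.1
      rw [abs_of_pos (by positivity)]
      rw [one_div]
      exact inv_anti₀ hc0 hω.1
  -- (2) LHS terms
  have hLHS : ∀ i, 1 ≤ i →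
      ∫ ω, (H i ω / p i ω) * (1 / p i ω - 1) ∂μ = ∫ ω, (1 / p i ω - 1) ∂μ := by
    intro i hi
    have h1 : ∀ ω, (H i ω / p i ω) * (1 / p i ω - 1)
        = ((p i ω)⁻¹ * (1 / p i ω - 1)) * H i ω := fun ω => by ring
    have hg : Measurable[ℱ (i - 1)] (fun ω => (p i ω)⁻¹ * (1 / p i ω - 1)) := by
      have := hpmeas i hi
      fun_prop
    have h2 := keyi i hi _ hg ((1 / c) * (1 / c + 1)) ?_
    · rw [show (fun ω => (H i ω / p i ω) * (1 / p i ω - 1))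
          = fun ω => ((p i ω)⁻¹ * (1 / p i ω - 1)) * H i ω from funext h1] at *
      rw [h2]
      refine integral_congr_ae ?_
      filter_upwards [hpb i hi] with ω hω
      have : p i ω ≠ 0 := ne_of_gt (lt_of_lt_of_le hc0 hω.1)
      field_simp
    · filter_upwards [hpb i hi] with ω hω
      have hp0 : 0 < p i ω := lt_of_lt_of_le hc0 hω.1
      have hpc : (p i ω)⁻¹ ≤ c⁻¹ := inv_anti₀ hc0 hω.1
      have hpinv0 : 0 < (p i ω)⁻¹ := by positivity
      rw [abs_mul]
      have e1 : |(p i ω)⁻¹| ≤ 1 / c := by rw [abs_of_pos hpinv0, one_div]; exact hpc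
      have e2 : |1 / p i ω - 1| ≤ 1 / c + 1 := by
        have hle : 1 / p i ω ≤ 1 / c := one_div_le_one_div_of_le hc0 hω.1
        have hpos : 0 < 1 / p i ω := by positivity
        rw [abs_sub_le_iff]
        constructor <;> linarith
      exact mul_le_mul e1 e2 (abs_nonneg _) (by positivity)
  -- (3) diagonal terms
  have hDiag : ∀ i, 1 ≤ i →
      ∫ ω, (H i ω / p i ω - 1) ^ 2 ∂μ = ∫ ω, (1 / p i ω - 1) ∂μ := by
    intro i hi
    have h1 : ∀ ω, (H i ω / p i ω - 1) ^ 2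
        = ((p i ω)⁻¹ ^ 2 - 2 * (p i ω)⁻¹) * H i ω + 1 := by
      intro ω
      rcases hH01 i hi ω with h | h <;> rw [h] <;> ring
    have hg : Measurable[ℱ (i - 1)] (fun ω => (p i ω)⁻¹ ^ 2 - 2 * (p i ω)⁻¹) := by
      have := hpmeas i hi
      fun_prop
    have hgC : ∀ᵐ ω ∂μ, |(p i ω)⁻¹ ^ 2 - 2 * (p i ω)⁻¹| ≤ (1/c)^2 + 2 * (1/c) := by
      filter_upwards [hpb i hi] with ω hω
      have hp0 : 0 < p i ω := lt_of_lt_of_le hc0 hω.1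
      have hpc : (p i ω)⁻¹ ≤ c⁻¹ := inv_anti₀ hc0 hω.1
      have hpinv0 : 0 < (p i ω)⁻¹ := by positivity
      rw [abs_sub_le_iff]
      constructor
      · have : (p i ω)⁻¹ ^ 2 ≤ c⁻¹ ^ 2 := by nlinarith
        simp only [one_div]
        nlinarith
      · simp only [one_div]
        nlinarith
    have h2 := keyi i hi _ hg _ hgC
    have hgH_int : Integrable (fun ω => ((p i ω)⁻¹ ^ 2 - 2 * (p i ω)⁻¹) * H i ω) μ := by
      refine hInt (by have := hpm i hi; have := hHm i hi; fun_prop) (((1/c)^2 + 2*(1/c)) * 1) ?_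
      filter_upwards [hgC] with ω hω
      rw [abs_mul]
      exact mul_le_mul hω (hH1 i hi ω) (abs_nonneg _) (by positivity)
    have hgp_int : Integrable (fun ω => ((p i ω)⁻¹ ^ 2 - 2 * (p i ω)⁻¹) * p i ω) μ := by
      refine hInt (by have := hpm i hi; fun_prop) (((1/c)^2 + 2*(1/c)) * 1) ?_
      filter_upwards [hgC, hpb i hi] with ω hω hω'
      have hp0 : 0 < p i ω := lt_of_lt_of_le hc0 hω'.1
      rw [abs_mul]
      exact mul_le_mul hω (by rw [abs_of_pos hp0]; exact hω'.2) (abs_nonneg _) (by positivity)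
    calc ∫ ω, (H i ω / p i ω - 1) ^ 2 ∂μ
        = ∫ ω, (((p i ω)⁻¹ ^ 2 - 2 * (p i ω)⁻¹) * H i ω + 1) ∂μ := by
          exact integral_congr_ae (Filter.Eventually.of_forall fun ω => h1 ω)
      _ = (∫ ω, ((p i ω)⁻¹ ^ 2 - 2 * (p i ω)⁻¹) * H i ω ∂μ) + ∫ ω, (1:ℝ) ∂μ := by
          rw [integral_add hgH_int (integrable_const 1)]
      _ = (∫ ω, ((p i ω)⁻¹ ^ 2 - 2 * (p i ω)⁻¹) * p i ω ∂μ) + ∫ ω, (1:ℝ) ∂μ := by rw [h2]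
      _ = ∫ ω, (((p i ω)⁻¹ ^ 2 - 2 * (p i ω)⁻¹) * p i ω + 1) ∂μ := by
          rw [integral_add hgp_int (integrable_const 1)]
      _ = ∫ ω, (1 / p i ω - 1) ∂μ := by
          refine integral_congr_ae ?_
          filter_upwards [hpb i hi] with ω hω
          have : p i ω ≠ 0 := ne_of_gt (lt_of_lt_of_le hc0 hω.1)
          field_simp
          ring
  -- (4) cross terms
  have hCross : ∀ i j, 1 ≤ i → i < j →
      ∫ ω, (H i ω / p i ω - 1) * (H j ω / p j ω - 1) ∂μ = 0 := by
    intro i j hi hij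
    have hj : 1 ≤ j := hi.trans hij.le
    have hij' : i ≤ j - 1 := Nat.le_sub_one_of_lt hij
    have hXi_meas : Measurable[ℱ (j - 1)] (fun ω => H i ω / p i ω) := by
      have h1 : Measurable[ℱ (j-1)] (H i) := (hHmeas i hi).mono (ℱ.mono hij') le_rfl
      have h2 : Measurable[ℱ (j-1)] (p i) :=
        (hpmeas i hi).mono (ℱ.mono ((Nat.sub_le i 1).trans hij')) le_rfl
      fun_prop
    have hg : Measurable[ℱ (j - 1)] (fun ω => (H i ω / p i ω - 1) * (p j ω)⁻¹) := by
      have := hpmeas j hj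
      fun_prop
    have hgC : ∀ᵐ ω ∂μ, |(H i ω / p i ω - 1) * (p j ω)⁻¹| ≤ (1/c + 1) * (1/c) := by
      filter_upwards [hXbd i hi, hpb j hj] with ω h1 h2
      have hp0 : 0 < p j ω := lt_of_lt_of_le hc0 h2.1
      rw [abs_mul]
      refine mul_le_mul ?_ ?_ (abs_nonneg _) (by positivity)
      · calc |H i ω / p i ω - 1| ≤ |H i ω / p i ω| + 1 := by
              simpa using abs_sub (H i ω / p i ω) 1
          _ ≤ 1/c + 1 := by linarith
      · rw [abs_of_pos (by positivity), one_div]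
        exact inv_anti₀ hc0 h2.1
    have h2 := keyi j hj _ hg _ hgC
    have hXi1_int : Integrable (fun ω => H i ω / p i ω - 1) μ := by
      refine hInt ((hXm i hi).sub measurable_const) (1/c + 1) ?_
      filter_upwards [hXbd i hi] with ω h1
      calc |H i ω / p i ω - 1| ≤ |H i ω / p i ω| + 1 := by
            simpa using abs_sub (H i ω / p i ω) 1
        _ ≤ 1/c + 1 := by linarith
    have hgH_int : Integrable (fun ω => (H i ω / p i ω - 1) * (p j ω)⁻¹ * H j ω) μ := by
      refine hInt (by have := hXm i hi; have := hpm j hj; have := hHm j hj; fun_prop)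
        ((1/c + 1) * (1/c) * 1) ?_
      filter_upwards [hgC] with ω hω
      rw [abs_mul]
      exact mul_le_mul hω (hH1 j hj ω) (abs_nonneg _) (by positivity)
    have hpt : ∀ ω, (H i ω / p i ω - 1) * (H j ω / p j ω - 1)
        = (H i ω / p i ω - 1) * (p j ω)⁻¹ * H j ω - (H i ω / p i ω - 1) := by
      intro ω; ring
    calc ∫ ω, (H i ω / p i ω - 1) * (H j ω / p j ω - 1) ∂μ
        = ∫ ω, ((H i ω / p i ω - 1) * (p j ω)⁻¹ * H j ω - (H i ω / p i ω - 1)) ∂μ :=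
          integral_congr_ae (Filter.Eventually.of_forall hpt)
      _ = (∫ ω, (H i ω / p i ω - 1) * (p j ω)⁻¹ * H j ω ∂μ)
            - ∫ ω, (H i ω / p i ω - 1) ∂μ := integral_sub hgH_int hXi1_int
      _ = (∫ ω, (H i ω / p i ω - 1) * (p j ω)⁻¹ * p j ω ∂μ)
            - ∫ ω, (H i ω / p i ω - 1) ∂μ := by rw [h2]
      _ = 0 := by
          have : (fun ω => (H i ω / p i ω - 1) * (p j ω)⁻¹ * p j ω)
              =ᵐ[μ] fun ω => H i ω / p i ω - 1 := by
            filter_upwards [hpb j hj] with ω hω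
            have : p j ω ≠ 0 := ne_of_gt (lt_of_lt_of_le hc0 hω.1)
            field_simp
          rw [integral_congr_ae this, sub_self]
  -- integrabilities of the summands
  have hXint : ∀ i, 1 ≤ i → Integrable (fun ω => H i ω / p i ω) μ :=
    fun i hi => hInt (hXm i hi) (1/c) (hXbd i hi)
  have hX1bd : ∀ i, 1 ≤ i → ∀ᵐ ω ∂μ, |H i ω / p i ω - 1| ≤ 1/c + 1 := by
    intro i hi
    filter_upwards [hXbd i hi] with ω h1
    calc |H i ω / p i ω - 1| ≤ |H i ω / p i ω| + 1 := by
          simpa using abs_sub (H i ω / p i ω) 1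
      _ ≤ 1/c + 1 := by linarith
  have hLint : ∀ i ∈ Finset.Icc 1 m,
      Integrable (fun ω => (H i ω / p i ω) * (1 / p i ω - 1)) μ := by
    intro i hi
    have hi1 : 1 ≤ i := (Finset.mem_Icc.mp hi).1
    refine hInt ((hXm i hi1).mul (by have := hpm i hi1; fun_prop)) ((1/c) * (1/c + 1)) ?_
    filter_upwards [hXbd i hi1, hpb i hi1] with ω h1 h2
    have hp0 : 0 < p i ω := lt_of_lt_of_le hc0 h2.1
    have hpc : (p i ω)⁻¹ ≤ c⁻¹ := inv_anti₀ hc0 h2.1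
    rw [abs_mul]
    refine mul_le_mul h1 ?_ (abs_nonneg _) (by positivity)
    have hle : 1 / p i ω ≤ 1 / c := one_div_le_one_div_of_le hc0 h2.1
    have hpos : 0 < 1 / p i ω := by positivity
    rw [abs_sub_le_iff]
    constructor <;> linarith
  -- expected value of the sum is m
  have hES : ∫ ω, ∑ i ∈ Finset.Icc 1 m, H i ω / p i ω ∂μ = (m : ℝ) := by
    rw [integral_finset_sum _ (fun i hi => hXint i (Finset.mem_Icc.mp hi).1)]
    rw [Finset.sum_congr rfl (fun i hi => hEX i (Finset.mem_Icc.mp hi).1)]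
    simp [Nat.card_Icc]
  rw [hES]
  -- rewrite the square as a double sum
  have hsq : ∀ ω, ((∑ i ∈ Finset.Icc 1 m, H i ω / p i ω) - (m : ℝ)) ^ 2
      = ∑ i ∈ Finset.Icc 1 m, ∑ j ∈ Finset.Icc 1 m,
          (H i ω / p i ω - 1) * (H j ω / p j ω - 1) := by
    intro ω
    have h1 : (∑ i ∈ Finset.Icc 1 m, H i ω / p i ω) - (m : ℝ)
        = ∑ i ∈ Finset.Icc 1 m, (H i ω / p i ω - 1) := by
      rw [Finset.sum_sub_distrib, Finset.sum_const, Nat.card_Icc]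
      simp
    rw [h1, sq, Finset.sum_mul_sum]
  have hprod_int : ∀ i ∈ Finset.Icc 1 m, ∀ j ∈ Finset.Icc 1 m,
      Integrable (fun ω => (H i ω / p i ω - 1) * (H j ω / p j ω - 1)) μ := by
    intro i hi j hj
    have hi1 : 1 ≤ i := (Finset.mem_Icc.mp hi).1
    have hj1 : 1 ≤ j := (Finset.mem_Icc.mp hj).1
    refine hInt (((hXm i hi1).sub measurable_const).mul ((hXm j hj1).sub measurable_const))
      ((1/c + 1) * (1/c + 1)) ?_
    filter_upwards [hX1bd i hi1, hX1bd j hj1] with ω h1 h2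
    rw [abs_mul]
    exact mul_le_mul h1 h2 (abs_nonneg _) (by positivity)
  calc ∫ ω, ∑ i ∈ Finset.Icc 1 m, (H i ω / p i ω) * (1 / p i ω - 1) ∂μ
      = ∑ i ∈ Finset.Icc 1 m, ∫ ω, (H i ω / p i ω) * (1 / p i ω - 1) ∂μ :=
        integral_finset_sum _ hLint
    _ = ∑ i ∈ Finset.Icc 1 m, ∫ ω, (1 / p i ω - 1) ∂μ :=
        Finset.sum_congr rfl (fun i hi => hLHS i (Finset.mem_Icc.mp hi).1)
    _ = ∑ i ∈ Finset.Icc 1 m, ∑ j ∈ Finset.Icc 1 m,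
          ∫ ω, (H i ω / p i ω - 1) * (H j ω / p j ω - 1) ∂μ := by
        refine Finset.sum_congr rfl (fun i hi => ?_)
        have hi1 : 1 ≤ i := (Finset.mem_Icc.mp hi).1
        rw [Finset.sum_eq_single_of_mem i hi]
        · rw [← hDiag i hi1]
          refine integral_congr_ae (Filter.Eventually.of_forall fun ω => ?_)
          ring
        · intro j hj hne
          have hj1 : 1 ≤ j := (Finset.mem_Icc.mp hj).1
          rcases lt_or_gt_of_ne hne with h | h
          · rw [show (fun ω => (H i ω / p i ω - 1) * (H j ω / p j ω - 1))
                = fun ω => (H j ω / p j ω - 1) * (H i ω / p i ω - 1) from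
                funext fun ω => mul_comm _ _]
            exact hCross j i hj1 h
          · exact hCross i j hi1 h
    _ = ∫ ω, ∑ i ∈ Finset.Icc 1 m, ∑ j ∈ Finset.Icc 1 m,
          (H i ω / p i ω - 1) * (H j ω / p j ω - 1) ∂μ := by
        rw [integral_finset_sum _ (fun i hi => ?_)]
        · refine Finset.sum_congr rfl (fun i hi => ?_)
          rw [integral_finset_sum _ (fun j hj => hprod_int i hi j hj)]
        · exact integrable_finset_sum _ (fun j hj => hprod_int i hi j hj)
    _ = ∫ ω, ((∑ i ∈ Finset.Icc 1 m, H i ω / p i ω) - (m : ℝ)) ^ 2 ∂μ :=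
        (integral_congr_ae (Filter.Eventually.of_forall fun ω => hsq ω)).symm
end

section
/- Let G be a simple graph on a finite vertex type V with m edges, and let e : Fin m ≃ edges(G) be an enumeration of its edges (the arrival order). For a 3-element set t of vertices that are pairwise adjacent in G (a triangle), let τ(t) ⊆ Fin m be the set of indices of its three edges. Then the triangle-count estimator N̂_T = ∑_{t triangle of G} ∏_{i∈τ(t)} H_i / p_i is unbiased for the number of triangles of G: E[N̂_T] = N_T, where N_T is the number of 3-element vertex sets of G that are pairwise adjacent. -/
open MeasureTheory Finset

lemma stmt17_aux {Ω : Type*} {m0 : MeasurableSpace Ω} {μ : Measure Ω}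
    [IsProbabilityMeasure μ] (ℱ : Filtration ℕ m0)
    (c : ℝ) (hc0 : 0 < c)
    (m : ℕ) (H p : Fin m → Ω → ℝ)
    (hHmeas : ∀ i : Fin m, Measurable[ℱ (i.val + 1)] (H i))
    (hH01 : ∀ (i : Fin m) (ω : Ω), H i ω = 0 ∨ H i ω = 1)
    (hpmeas : ∀ i : Fin m, Measurable[ℱ i.val] (p i))
    (hpb : ∀ i : Fin m, ∀ᵐ ω ∂μ, c ≤ p i ω ∧ p i ω ≤ 1)
    (hcond : ∀ i : Fin m, μ[H i | ℱ i.val] =ᵐ[μ] p i) :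
    (∀ S : Finset (Fin m), Integrable (fun ω => ∏ i ∈ S, H i ω / p i ω) μ) ∧
    (∀ S : Finset (Fin m), ∫ ω, ∏ i ∈ S, H i ω / p i ω ∂μ = 1) := by
  have hpae : ∀ᵐ ω ∂μ, ∀ i : Fin m, c ≤ p i ω ∧ p i ω ≤ 1 := ae_all_iff.2 hpb
  have hHm0 : ∀ i : Fin m, Measurable (H i) := fun i => (hHmeas i).mono (ℱ.le _) le_rfl
  have hpm0 : ∀ i : Fin m, Measurable (p i) := fun i => (hpmeas i).mono (ℱ.le _) le_rfl
  have hHb : ∀ (i : Fin m) (ω : Ω), |H i ω| ≤ 1 := by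
    intro i ω; rcases hH01 i ω with h | h <;> simp [h]
  -- integrability of any such product
  have hint : ∀ S : Finset (Fin m), Integrable (fun ω => ∏ i ∈ S, H i ω / p i ω) μ := by
    intro S
    refine ⟨(Finset.measurable_prod S fun i _ => (hHm0 i).div (hpm0 i)).aestronglyMeasurable, ?_⟩
    refine HasFiniteIntegral.of_bounded (C := (1 / c) ^ S.card) ?_
    filter_upwards [hpae] with ω hω
    have : ‖∏ i ∈ S, H i ω / p i ω‖ ≤ ∏ i ∈ S, (1 / c) := by
      rw [Real.norm_eq_abs, Finset.abs_prod]
      refine Finset.prod_le_prod (fun i _ => abs_nonneg _) ?_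
      intro i _
      have hpi := hω i
      have hpi0 : 0 < p i ω := lt_of_lt_of_le hc0 hpi.1
      rw [abs_div, abs_of_pos hpi0, div_le_div_iff₀ hpi0 hc0]
      calc |H i ω| * c ≤ 1 * c := by nlinarith [hHb i ω]
        _ = c := one_mul c
        _ ≤ p i ω := hpi.1
        _ = 1 * p i ω := (one_mul _).symm
    simpa using this
  refine ⟨hint, ?_⟩
  intro S
  induction S using Finset.induction_on_max with
  | empty => simp
  | insert a S hS IH =>
    have haS : a ∉ S := fun h => lt_irrefl a (hS a h)
    set n := a.val with hn
    set Y : Ω → ℝ := fun ω => ∏ i ∈ S, H i ω / p i ω with hY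
    have hYmeas : Measurable[ℱ n] Y := by
      refine Finset.measurable_prod S fun i hi => Measurable.div ?_ ?_
      · exact (hHmeas i).mono (ℱ.mono (by exact_mod_cast hS i hi)) le_rfl
      · exact (hpmeas i).mono (ℱ.mono (le_of_lt (by exact_mod_cast hS i hi))) le_rfl
    set Z : Ω → ℝ := fun ω => Y ω / p a ω with hZ
    have hZmeas : Measurable[ℱ n] Z := hYmeas.div (hpmeas a)
    have hZH : (fun ω => Z ω * H a ω) = fun ω => ∏ i ∈ insert a S, H i ω / p i ω := by
      funext ω
      rw [Finset.prod_insert haS]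
      simp only [hZ, hY]
      ring
    have hZHint : Integrable (fun ω => Z ω * H a ω) μ := by rw [hZH]; exact hint _
    have hHaint : Integrable (H a) μ := by
      refine ⟨(hHm0 a).aestronglyMeasurable, HasFiniteIntegral.of_bounded (C := 1) ?_⟩
      exact Filter.Eventually.of_forall fun ω => by simpa using hHb a ω
    have h1 : μ[fun ω => Z ω * H a ω | ℱ n] =ᵐ[μ]
        fun ω => Z ω * (μ[H a | ℱ n]) ω :=
      condExp_mul_of_stronglyMeasurable_left hZmeas.stronglyMeasurable hZHint hHaint
    have h2 : (fun ω => Z ω * (μ[H a | ℱ n]) ω) =ᵐ[μ] fun ω => Z ω * p a ω := by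
      filter_upwards [hcond a] with ω hω
      rw [hω]
    have h3 : (fun ω => Z ω * p a ω) =ᵐ[μ] Y := by
      filter_upwards [hpae] with ω hω
      have hpa0 : p a ω ≠ 0 := ne_of_gt (lt_of_lt_of_le hc0 (hω a).1)
      simp only [hZ]
      field_simp
    calc ∫ ω, ∏ i ∈ insert a S, H i ω / p i ω ∂μ
        = ∫ ω, Z ω * H a ω ∂μ := by rw [hZH]
      _ = ∫ ω, (μ[fun ω => Z ω * H a ω | ℱ n]) ω ∂μ := (integral_condExp (ℱ.le n)).symm
      _ = ∫ ω, Y ω ∂μ := integral_congr_ae (h1.trans (h2.trans h3))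
      _ = 1 := IH

theorem stmt17 {Ω : Type*} {m0 : MeasurableSpace Ω} {μ : Measure Ω}
    [IsProbabilityMeasure μ] (ℱ : Filtration ℕ m0)
    (c : ℝ) (hc0 : 0 < c) (hc1 : c ≤ 1)
    {V : Type*} [Fintype V] [DecidableEq V]
    (G : SimpleGraph V) [DecidableRel G.Adj]
    (m : ℕ) (e : Fin m ≃ G.edgeSet)
    (H p : Fin m → Ω → ℝ)
    (hHmeas : ∀ i : Fin m, Measurable[ℱ (i.val + 1)] (H i))
    (hH01 : ∀ (i : Fin m) (ω : Ω), H i ω = 0 ∨ H i ω = 1)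
    (hpmeas : ∀ i : Fin m, Measurable[ℱ i.val] (p i))
    (hpb : ∀ i : Fin m, ∀ᵐ ω ∂μ, c ≤ p i ω ∧ p i ω ≤ 1)
    (hcond : ∀ i : Fin m, μ[H i | ℱ i.val] =ᵐ[μ] p i) :
    ∫ ω, ∑ t ∈ G.cliqueFinset 3,
        ∏ i ∈ Finset.univ.filter
          (fun i : Fin m => ∀ v ∈ (↑(e i) : Sym2 V), v ∈ t),
          H i ω / p i ω ∂μ
      = ((G.cliqueFinset 3).card : ℝ) := by
  obtain ⟨hint, hkey⟩ := stmt17_aux ℱ c hc0 m H p hHmeas hH01 hpmeas hpb hcond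
  rw [integral_finset_sum _ (fun t _ => hint _)]
  simp only [hkey]
  simp
end

section
/- Let G be a simple graph on a finite vertex type V with m edges, and let e : Fin m ≃ edges(G) be an enumeration of its edges (the arrival order). A connected path of length two is an unordered pair {i, j} of distinct edge indices whose corresponding edges share a vertex. Then the estimator N̂_Λ = ∑_{{i,j} path of length two} (H_i / p_i) · (H_j / p_j) is unbiased for the number N_Λ of connected paths of length two in G: E[N̂_Λ] = N_Λ. -/
open MeasureTheory Finset

private lemma key_lemma {Ω : Type*} {m0 : MeasurableSpace Ω} {μ : Measure Ω}
    [IsProbabilityMeasure μ] (ℱ : Filtration ℕ m0)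
    (c : ℝ) (hc0 : 0 < c)
    (n : ℕ) (H p : Ω → ℝ)
    (hHmeas : Measurable[ℱ (n + 1)] H)
    (hH01 : ∀ ω, H ω = 0 ∨ H ω = 1)
    (hpmeas : Measurable[ℱ n] p)
    (hpb : ∀ᵐ ω ∂μ, c ≤ p ω ∧ p ω ≤ 1)
    (hcond : μ[H | ℱ n] =ᵐ[μ] p)
    (f : Ω → ℝ) (C : ℝ) (hf : Measurable[ℱ n] f)
    (hfb : ∀ᵐ ω ∂μ, |f ω| ≤ C) :
    ∫ ω, f ω * (H ω / p ω) ∂μ = ∫ ω, f ω ∂μ := by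
  set g : Ω → ℝ := fun ω => f ω / p ω with hg
  have hgmeas : Measurable[ℱ n] g := hf.div hpmeas
  have hgmeas0 : Measurable g := hgmeas.mono (ℱ.le n) le_rfl
  have hHmeas0 : Measurable H := hHmeas.mono (ℱ.le (n + 1)) le_rfl
  have hHbd : ∀ ω, |H ω| ≤ 1 := by
    intro ω; rcases hH01 ω with h | h <;> simp [h]
  have hHint : Integrable H μ := by
    refine (integrable_const (1 : ℝ)).mono' hHmeas0.aestronglyMeasurable ?_
    filter_upwards with ω using by simpa using hHbd ω
  have hbound : ∀ᵐ ω ∂μ, |g ω * H ω| ≤ C / c := by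
    filter_upwards [hpb, hfb] with ω ⟨hc, h1⟩ hfC
    have hp0 : 0 < p ω := lt_of_lt_of_le hc0 hc
    have : |g ω| = |f ω| / p ω := by
      rw [hg]; simp [abs_div, abs_of_pos hp0]
    rw [abs_mul, this]
    calc |f ω| / p ω * |H ω| ≤ |f ω| / p ω * 1 := by
          exact mul_le_mul_of_nonneg_left (hHbd ω) (by positivity)
      _ = |f ω| / p ω := mul_one _
      _ ≤ C / c := by
          apply div_le_div₀ (le_trans (abs_nonneg _) hfC) hfC hc0 hc
  have hgHint : Integrable (fun ω => g ω * H ω) μ := by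
    refine (integrable_const (C / c)).mono'
      (hgmeas0.mul hHmeas0).aestronglyMeasurable ?_
    filter_upwards [hbound] with ω h using h
  have heq : (fun ω => f ω * (H ω / p ω)) = fun ω => g ω * H ω := by
    funext ω; rw [hg]; ring
  rw [heq]
  have hpull : μ[g * H | ℱ n] =ᵐ[μ] g * μ[H | ℱ n] :=
    condExp_mul_of_stronglyMeasurable_left hgmeas.stronglyMeasurable hgHint hHint
  have h1 : ∫ ω, g ω * H ω ∂μ = ∫ ω, (μ[g * H | ℱ n]) ω ∂μ :=
    (integral_condExp (ℱ.le n)).symm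
  rw [h1, integral_congr_ae (hpull.trans ?_)]
  · filter_upwards [hpb, hcond] with ω ⟨hc, _⟩ hcω
    show g ω * (μ[H | ℱ n]) ω = f ω
    rw [hcω]
    show f ω / p ω * p ω = f ω
    exact div_mul_cancel₀ _ (ne_of_gt (lt_of_lt_of_le hc0 hc))
theorem stmt18 {Ω : Type*} {m0 : MeasurableSpace Ω} {μ : Measure Ω}
    [IsProbabilityMeasure μ] (ℱ : Filtration ℕ m0)
    (c : ℝ) (hc0 : 0 < c) (hc1 : c ≤ 1)
    {V : Type*} [Fintype V] [DecidableEq V]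
    (G : SimpleGraph V) [DecidableRel G.Adj]
    (m : ℕ) (e : Fin m ≃ G.edgeSet)
    (H p : Fin m → Ω → ℝ)
    (hHmeas : ∀ i : Fin m, Measurable[ℱ (i.val + 1)] (H i))
    (hH01 : ∀ (i : Fin m) (ω : Ω), H i ω = 0 ∨ H i ω = 1)
    (hpmeas : ∀ i : Fin m, Measurable[ℱ i.val] (p i))
    (hpb : ∀ i : Fin m, ∀ᵐ ω ∂μ, c ≤ p i ω ∧ p i ω ≤ 1)
    (hcond : ∀ i : Fin m, μ[H i | ℱ i.val] =ᵐ[μ] p i) :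
    ∫ ω, ∑ q ∈ Finset.univ.filter
        (fun q : Fin m × Fin m => q.1 < q.2 ∧
          ∃ v : V, v ∈ (↑(e q.1) : Sym2 V) ∧ v ∈ (↑(e q.2) : Sym2 V)),
        (H q.1 ω / p q.1 ω) * (H q.2 ω / p q.2 ω) ∂μ
      = ((Finset.univ.filter
        (fun q : Fin m × Fin m => q.1 < q.2 ∧
          ∃ v : V, v ∈ (↑(e q.1) : Sym2 V) ∧ v ∈ (↑(e q.2) : Sym2 V))).card : ℝ) := by
  -- ratio measurability and boundedness
  have hratio_meas : ∀ i : Fin m, Measurable (fun ω => H i ω / p i ω) := fun i =>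
    ((hHmeas i).mono (ℱ.le _) le_rfl).div ((hpmeas i).mono (ℱ.le _) le_rfl)
  have hratio_bd : ∀ i : Fin m, ∀ᵐ ω ∂μ, |H i ω / p i ω| ≤ 1 / c := by
    intro i
    filter_upwards [hpb i] with ω ⟨hcω, h1ω⟩
    have hp0 : 0 < p i ω := lt_of_lt_of_le hc0 hcω
    have hH : |H i ω| ≤ 1 := by rcases hH01 i ω with h | h <;> simp [h]
    rw [abs_div, abs_of_pos hp0]
    exact div_le_div₀ (zero_le_one) hH hc0 hcω
  have hint : ∀ q : Fin m × Fin m,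
      Integrable (fun ω => (H q.1 ω / p q.1 ω) * (H q.2 ω / p q.2 ω)) μ := by
    intro q
    refine (integrable_const ((1 / c) * (1 / c))).mono'
      ((hratio_meas q.1).mul (hratio_meas q.2)).aestronglyMeasurable ?_
    filter_upwards [hratio_bd q.1, hratio_bd q.2] with ω h1 h2
    rw [Real.norm_eq_abs, abs_mul]
    exact mul_le_mul h1 h2 (abs_nonneg _) (by positivity)
  rw [integral_finset_sum _ (fun q _ => hint q)]
  rw [Finset.card_eq_sum_ones, Nat.cast_sum]
  apply Finset.sum_congr rfl
  intro q hq
  have hlt : q.1 < q.2 := (Finset.mem_filter.mp hq).2.1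
  have hle : q.1.val + 1 ≤ q.2.val := hlt
  -- first integration: over index q.2
  have step1 : ∫ ω, (H q.1 ω / p q.1 ω) * (H q.2 ω / p q.2 ω) ∂μ
      = ∫ ω, H q.1 ω / p q.1 ω ∂μ := by
    apply key_lemma ℱ c hc0 q.2.val (H q.2) (p q.2) (hHmeas q.2) (hH01 q.2)
      (hpmeas q.2) (hpb q.2) (hcond q.2) _ (1 / c)
    · exact ((hHmeas q.1).mono (ℱ.mono hle) le_rfl).div
        ((hpmeas q.1).mono (ℱ.mono (le_of_lt hlt)) le_rfl)
    · exact hratio_bd q.1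
  have step2 : ∫ ω, H q.1 ω / p q.1 ω ∂μ = ∫ ω, (1 : ℝ) ∂μ := by
    have := key_lemma ℱ c hc0 q.1.val (H q.1) (p q.1) (hHmeas q.1) (hH01 q.1)
      (hpmeas q.1) (hpb q.1) (hcond q.1) (fun _ => (1 : ℝ)) 1
      measurable_const (by filter_upwards with ω using by simp)
    simpa using this
  rw [step1, step2]
  simp
end

section
/- Let T be a finite family of 3-element sets of indices such that any two distinct members of T intersect in at most one index (as is the case for the edge-index sets of distinct triangles of a simple graph), and for τ ∈ T write Ŝ(τ) = ∏_{i∈τ} H_i / p_i. Then E[ ∑_{τ∈T} Ŝ(τ)(Ŝ(τ) − 1) + ∑_{τ ≠ τ' ∈ T, τ ∩ τ' ≠ ∅} Ŝ(τ ∪ τ') · (Ŝ(τ ∩ τ') − 1) ] = Var( ∑_{τ∈T} Ŝ(τ) ); that is, this expression is an unbiased estimator of the variance of the triangle-count estimator N̂_T = ∑_{τ∈T} Ŝ(τ). -/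
open MeasureTheory Finset

theorem stmt19 {Ω : Type*} {m0 : MeasurableSpace Ω} {μ : Measure Ω}
    [IsProbabilityMeasure μ] (ℱ : Filtration ℕ m0)
    (c : ℝ) (hc0 : 0 < c) (hc1 : c ≤ 1)
    (H p : ℕ → Ω → ℝ)
    (hHmeas : ∀ i, 1 ≤ i → Measurable[ℱ i] (H i))
    (hH01 : ∀ i, 1 ≤ i → ∀ ω, H i ω = 0 ∨ H i ω = 1)
    (hpmeas : ∀ i, 1 ≤ i → Measurable[ℱ (i - 1)] (p i))
    (hpb : ∀ i, 1 ≤ i → ∀ᵐ ω ∂μ, c ≤ p i ω ∧ p i ω ≤ 1)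
    (hcond : ∀ i, 1 ≤ i → μ[H i | ℱ (i - 1)] =ᵐ[μ] p i)
    (T : Finset (Finset ℕ))
    (hT3 : ∀ τ ∈ T, τ.card = 3)
    (hT1 : ∀ τ ∈ T, ∀ i ∈ τ, 1 ≤ i)
    (hTint : ∀ τ ∈ T, ∀ τ' ∈ T, τ ≠ τ' → (τ ∩ τ').card ≤ 1) :
    ∫ ω, ((∑ τ ∈ T, (∏ i ∈ τ, H i ω / p i ω) * ((∏ i ∈ τ, H i ω / p i ω) - 1))
        + ∑ τ ∈ T, ∑ τ' ∈ T,
            (if τ ≠ τ' ∧ (τ ∩ τ').Nonempty then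
              (∏ i ∈ τ ∪ τ', H i ω / p i ω) * ((∏ i ∈ τ ∩ τ', H i ω / p i ω) - 1)
            else 0)) ∂μ
      = ∫ ω, ((∑ τ ∈ T, ∏ i ∈ τ, H i ω / p i ω)
          - ∫ ω', ∑ τ ∈ T, ∏ i ∈ τ, H i ω' / p i ω' ∂μ) ^ 2 ∂μ := by
  -- basic facts about S i = H i / p i
  have hc0' : (0:ℝ) < 1 / c := by positivity
  have hSmeas : ∀ i, 1 ≤ i → Measurable (fun ω => H i ω / p i ω) := fun i hi =>
    ((hHmeas i hi).mono (ℱ.le i) le_rfl).div ((hpmeas i hi).mono (ℱ.le _) le_rfl)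
  have hSbd : ∀ i, 1 ≤ i → ∀ᵐ ω ∂μ, |H i ω / p i ω| ≤ 1 / c := by
    intro i hi
    filter_upwards [hpb i hi] with ω hω
    have h1 : |H i ω| ≤ 1 := by rcases hH01 i hi ω with h | h <;> simp [h]
    have hp0 : 0 < p i ω := lt_of_lt_of_le hc0 hω.1
    rw [abs_div, abs_of_pos hp0, div_le_div_iff₀ hp0 hc0]
    nlinarith [abs_nonneg (H i ω)]
  -- a.e. bound for products
  have hProdbd : ∀ J : Finset ℕ, (∀ i ∈ J, 1 ≤ i) →
      ∀ᵐ ω ∂μ, |∏ i ∈ J, H i ω / p i ω| ≤ (1/c) ^ J.card := by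
    intro J hJ
    have h : ∀ᵐ ω ∂μ, ∀ i ∈ J, |H i ω / p i ω| ≤ 1 / c :=
      (Filter.eventually_all_finset J).2 fun i hi => hSbd i (hJ i hi)
    filter_upwards [h] with ω hω
    calc |∏ i ∈ J, H i ω / p i ω| = ∏ i ∈ J, |H i ω / p i ω| := Finset.abs_prod J _
      _ ≤ ∏ _i ∈ J, (1/c) := Finset.prod_le_prod (fun i _ => abs_nonneg _) hω
      _ = (1/c) ^ J.card := Finset.prod_const _
  -- products are measurable
  have hProdMeas : ∀ J : Finset ℕ, (∀ i ∈ J, 1 ≤ i) →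
      Measurable (fun ω => ∏ i ∈ J, H i ω / p i ω) := by
    intro J hJ
    exact Finset.measurable_prod J fun i hi => hSmeas i (hJ i hi)
  -- integrability from a.e. bound
  have hIntOfBd : ∀ (f : Ω → ℝ) (C : ℝ), Measurable f → (∀ᵐ ω ∂μ, |f ω| ≤ C) →
      Integrable f μ := by
    intro f C hf hb
    exact (integrable_const C).mono' hf.aestronglyMeasurable
      (by filter_upwards [hb] with ω h using by simpa [Real.norm_eq_abs] using h)
  have hIntProd : ∀ J : Finset ℕ, (∀ i ∈ J, 1 ≤ i) →
      Integrable (fun ω => ∏ i ∈ J, H i ω / p i ω) μ := fun J hJ =>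
    hIntOfBd _ _ (hProdMeas J hJ) (hProdbd J hJ)
  have hIntProd2 : ∀ J K : Finset ℕ, (∀ i ∈ J, 1 ≤ i) → (∀ i ∈ K, 1 ≤ i) →
      Integrable (fun ω => (∏ i ∈ J, H i ω / p i ω) * (∏ i ∈ K, H i ω / p i ω)) μ := by
    intro J K hJ hK
    refine hIntOfBd _ ((1/c)^J.card * (1/c)^K.card)
      ((hProdMeas J hJ).mul (hProdMeas K hK)) ?_
    filter_upwards [hProdbd J hJ, hProdbd K hK] with ω h1 h2
    rw [abs_mul]
    exact mul_le_mul h1 h2 (abs_nonneg _) (by positivity)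
  -- conditional expectation of one factor
  have hB : ∀ a, 1 ≤ a → μ[(fun ω => H a ω / p a ω) | ℱ (a-1)] =ᵐ[μ] fun _ => (1:ℝ) := by
    intro a ha
    have hfm : StronglyMeasurable[ℱ (a-1)] (fun ω => (p a ω)⁻¹) :=
      ((hpmeas a ha).inv).stronglyMeasurable
    have hIntH : Integrable (H a) μ := by
      refine hIntOfBd _ 1 ((hHmeas a ha).mono (ℱ.le a) le_rfl) ?_
      filter_upwards with ω
      rcases hH01 a ha ω with h | h <;> simp [h]
    have heq : (fun ω => H a ω / p a ω) = (fun ω => (p a ω)⁻¹) * H a := by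
      funext ω; simp [div_eq_inv_mul]
    have hIntS : Integrable ((fun ω => (p a ω)⁻¹) * H a) μ := by
      rw [← heq]; exact hIntOfBd _ _ (hSmeas a ha) (hSbd a ha)
    have h1 := condExp_mul_of_stronglyMeasurable_left (μ := μ) hfm hIntS hIntH
    calc μ[(fun ω => H a ω / p a ω) | ℱ (a-1)]
        = μ[(fun ω => (p a ω)⁻¹) * H a | ℱ (a-1)] := by rw [heq]
      _ =ᵐ[μ] (fun ω => (p a ω)⁻¹) * μ[H a | ℱ (a-1)] := h1
      _ =ᵐ[μ] fun _ => (1:ℝ) := by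
          filter_upwards [hcond a ha, hpb a ha] with ω hω hpω
          have : p a ω ≠ 0 := ne_of_gt (lt_of_lt_of_le hc0 hpω.1)
          simp [hω, inv_mul_cancel₀ this]
  -- E[∏ S] = 1
  have int_one : ∀ J : Finset ℕ, (∀ i ∈ J, 1 ≤ i) →
      ∫ ω, ∏ i ∈ J, H i ω / p i ω ∂μ = 1 := by
    intro J
    induction J using Finset.induction_on_max with
    | empty => intro _; simp
    | insert a J hmax IH =>
      intro hJ1
      have ha1 : 1 ≤ a := hJ1 a (mem_insert_self a J)
      have haJ : a ∉ J := fun h => lt_irrefl a (hmax a h)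
      have hJ1' : ∀ i ∈ J, 1 ≤ i := fun i hi => hJ1 i (mem_insert_of_mem hi)
      have hgm : StronglyMeasurable[ℱ (a-1)] (fun ω => ∏ i ∈ J, H i ω / p i ω) := by
        refine Measurable.stronglyMeasurable ?_
        refine Finset.measurable_prod J fun i hi => ?_
        have hia : i ≤ a - 1 := by have := hmax i hi; omega
        have hi1 : 1 ≤ i := hJ1' i hi
        exact ((hHmeas i hi1).mono (ℱ.mono hia) le_rfl).div
          ((hpmeas i hi1).mono (ℱ.mono (by omega)) le_rfl)
      have hIntSa : Integrable (fun ω => H a ω / p a ω) μ :=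
        hIntOfBd _ _ (hSmeas a ha1) (hSbd a ha1)
      have hIntg : Integrable (fun ω => ∏ i ∈ J, H i ω / p i ω) μ := hIntProd J hJ1'
      have hIntgS : Integrable ((fun ω => ∏ i ∈ J, H i ω / p i ω)
          * (fun ω => H a ω / p a ω)) μ := by
        have := hIntProd2 J {a} hJ1' (by simpa using ha1)
        simpa [Pi.mul_def] using this
      have hm : ℱ (a-1) ≤ m0 := ℱ.le _
      have h2 : μ[(fun ω => ∏ i ∈ J, H i ω / p i ω) * (fun ω => H a ω / p a ω) | ℱ (a-1)]
          =ᵐ[μ] (fun ω => ∏ i ∈ J, H i ω / p i ω) * μ[(fun ω => H a ω / p a ω) | ℱ (a-1)] :=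
        condExp_mul_of_stronglyMeasurable_left hgm hIntgS hIntSa
      have h3 : μ[(fun ω => ∏ i ∈ J, H i ω / p i ω) * (fun ω => H a ω / p a ω) | ℱ (a-1)]
          =ᵐ[μ] fun ω => ∏ i ∈ J, H i ω / p i ω := by
        filter_upwards [h2, hB a ha1] with ω hω hb
        rw [hω]; simp [hb]
      have key : ∫ ω, (∏ i ∈ J, H i ω / p i ω) * (H a ω / p a ω) ∂μ
          = ∫ ω, ∏ i ∈ J, H i ω / p i ω ∂μ := by
        have e0 : (fun ω => (∏ i ∈ J, H i ω / p i ω) * (H a ω / p a ω))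
            = (fun ω => ∏ i ∈ J, H i ω / p i ω) * (fun ω => H a ω / p a ω) := rfl
        rw [show (∫ ω, (∏ i ∈ J, H i ω / p i ω) * (H a ω / p a ω) ∂μ)
            = ∫ ω, ((fun ω => ∏ i ∈ J, H i ω / p i ω) * (fun ω => H a ω / p a ω)) ω ∂μ
          from by rw [← e0],
          ← integral_condExp hm]
        exact integral_congr_ae h3
      calc ∫ ω, ∏ i ∈ insert a J, H i ω / p i ω ∂μ
          = ∫ ω, (∏ i ∈ J, H i ω / p i ω) * (H a ω / p a ω) ∂μ := by
            congr 1; funext ω; rw [Finset.prod_insert haJ]; ring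
        _ = ∫ ω, ∏ i ∈ J, H i ω / p i ω ∂μ := key
        _ = 1 := IH hJ1'
  -- pointwise identity for the LHS integrand
  have hpt : ∀ ω, ((∑ τ ∈ T, (∏ i ∈ τ, H i ω / p i ω) * ((∏ i ∈ τ, H i ω / p i ω) - 1))
        + ∑ τ ∈ T, ∑ τ' ∈ T,
            (if τ ≠ τ' ∧ (τ ∩ τ').Nonempty then
              (∏ i ∈ τ ∪ τ', H i ω / p i ω) * ((∏ i ∈ τ ∩ τ', H i ω / p i ω) - 1)
            else 0))
      = ∑ τ ∈ T, ∑ τ' ∈ T,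
          ((∏ i ∈ τ, H i ω / p i ω) * (∏ i ∈ τ', H i ω / p i ω)
            - ∏ i ∈ τ ∪ τ', H i ω / p i ω) := by
    intro ω
    rw [← Finset.sum_add_distrib]
    refine Finset.sum_congr rfl fun τ hτ => ?_
    have hsplit : ∀ τ' ∈ T,
        (∏ i ∈ τ, H i ω / p i ω) * (∏ i ∈ τ', H i ω / p i ω)
            - ∏ i ∈ τ ∪ τ', H i ω / p i ω
        = (if τ ≠ τ' ∧ (τ ∩ τ').Nonempty then
              (∏ i ∈ τ ∪ τ', H i ω / p i ω) * ((∏ i ∈ τ ∩ τ', H i ω / p i ω) - 1)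
            else 0)
          + (if τ' = τ then
              (∏ i ∈ τ, H i ω / p i ω) * ((∏ i ∈ τ, H i ω / p i ω) - 1) else 0) := by
      intro τ' _
      by_cases h1 : τ' = τ
      · subst h1
        simp only [ne_eq, not_true_eq_false, false_and, if_false, if_true,
          Finset.union_self]
        ring
      · rw [if_neg h1]
        by_cases h2 : (τ ∩ τ').Nonempty
        · rw [if_pos ⟨fun h => h1 h.symm, h2⟩, mul_sub, mul_one, Finset.prod_union_inter,
            add_zero]
        · rw [if_neg (fun h => h2 h.2), add_zero]
          have hd : Disjoint τ τ' := by
            rw [Finset.not_nonempty_iff_eq_empty] at h2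
            exact Finset.disjoint_iff_inter_eq_empty.2 h2
          rw [Finset.prod_union hd]
          ring
    rw [Finset.sum_congr rfl hsplit, Finset.sum_add_distrib, Finset.sum_ite_eq' T τ, if_pos hτ]
    ring
  -- rewrite LHS
  have hT1' : ∀ τ ∈ T, ∀ τ' ∈ T, ∀ i ∈ τ ∪ τ', 1 ≤ i := by
    intro τ hτ τ' hτ' i hi
    rcases Finset.mem_union.1 hi with h | h
    · exact hT1 τ hτ i h
    · exact hT1 τ' hτ' i h
  have hIntG : ∀ τ ∈ T, ∀ τ' ∈ T, Integrable (fun ω =>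
      (∏ i ∈ τ, H i ω / p i ω) * (∏ i ∈ τ', H i ω / p i ω)
        - ∏ i ∈ τ ∪ τ', H i ω / p i ω) μ := by
    intro τ hτ τ' hτ'
    exact (hIntProd2 τ τ' (hT1 τ hτ) (hT1 τ' hτ')).sub (hIntProd _ (hT1' τ hτ τ' hτ'))
  have hLHS : ∫ ω, ((∑ τ ∈ T, (∏ i ∈ τ, H i ω / p i ω) * ((∏ i ∈ τ, H i ω / p i ω) - 1))
        + ∑ τ ∈ T, ∑ τ' ∈ T,
            (if τ ≠ τ' ∧ (τ ∩ τ').Nonempty then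
              (∏ i ∈ τ ∪ τ', H i ω / p i ω) * ((∏ i ∈ τ ∩ τ', H i ω / p i ω) - 1)
            else 0)) ∂μ
      = (∑ τ ∈ T, ∑ τ' ∈ T,
          ∫ ω, (∏ i ∈ τ, H i ω / p i ω) * (∏ i ∈ τ', H i ω / p i ω) ∂μ)
        - (T.card : ℝ) * T.card := by
    rw [integral_congr_ae (Filter.Eventually.of_forall hpt)]
    rw [integral_finset_sum T (fun τ hτ => integrable_finset_sum T
      (fun τ' hτ' => hIntG τ hτ τ' hτ'))]
    have step : ∀ τ ∈ T, (∫ ω, ∑ τ' ∈ T, ((∏ i ∈ τ, H i ω / p i ω)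
            * (∏ i ∈ τ', H i ω / p i ω) - ∏ i ∈ τ ∪ τ', H i ω / p i ω) ∂μ)
        = (∑ τ' ∈ T, ∫ ω, (∏ i ∈ τ, H i ω / p i ω)
            * (∏ i ∈ τ', H i ω / p i ω) ∂μ) - (T.card : ℝ) := by
      intro τ hτ
      rw [integral_finset_sum T (fun τ' hτ' => hIntG τ hτ τ' hτ')]
      have h4 : ∀ τ' ∈ T, (∫ ω, ((∏ i ∈ τ, H i ω / p i ω) * (∏ i ∈ τ', H i ω / p i ω)
            - ∏ i ∈ τ ∪ τ', H i ω / p i ω) ∂μ)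
          = (∫ ω, (∏ i ∈ τ, H i ω / p i ω) * (∏ i ∈ τ', H i ω / p i ω) ∂μ) - 1 := by
        intro τ' hτ'
        rw [integral_sub (hIntProd2 τ τ' (hT1 τ hτ) (hT1 τ' hτ'))
          (hIntProd _ (hT1' τ hτ τ' hτ')), int_one _ (hT1' τ hτ τ' hτ')]
      rw [Finset.sum_congr rfl h4, Finset.sum_sub_distrib]
      simp
    rw [Finset.sum_congr rfl step, Finset.sum_sub_distrib]
    simp [Finset.sum_const, nsmul_eq_mul]
  rw [hLHS]
  -- the RHS
  have hIntN : Integrable (fun ω => ∑ τ ∈ T, ∏ i ∈ τ, H i ω / p i ω) μ :=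
    integrable_finset_sum T (fun τ hτ => hIntProd τ (hT1 τ hτ))
  have hm : (∫ ω', ∑ τ ∈ T, ∏ i ∈ τ, H i ω' / p i ω' ∂μ) = (T.card : ℝ) := by
    rw [integral_finset_sum T (fun τ hτ => hIntProd τ (hT1 τ hτ))]
    rw [Finset.sum_congr rfl (fun τ hτ => int_one τ (hT1 τ hτ))]
    simp
  have hIntN2 : Integrable (fun ω => (∑ τ ∈ T, ∏ i ∈ τ, H i ω / p i ω)
      * (∑ τ' ∈ T, ∏ i ∈ τ', H i ω / p i ω)) μ := by
    have : (fun ω => (∑ τ ∈ T, ∏ i ∈ τ, H i ω / p i ω)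
        * (∑ τ' ∈ T, ∏ i ∈ τ', H i ω / p i ω))
      = fun ω => ∑ τ ∈ T, ∑ τ' ∈ T,
          (∏ i ∈ τ, H i ω / p i ω) * (∏ i ∈ τ', H i ω / p i ω) := by
      funext ω; rw [Finset.sum_mul_sum]
    rw [this]
    exact integrable_finset_sum T (fun τ hτ => integrable_finset_sum T
      (fun τ' hτ' => hIntProd2 τ τ' (hT1 τ hτ) (hT1 τ' hτ')))
  have hexp : ∀ ω, ((∑ τ ∈ T, ∏ i ∈ τ, H i ω / p i ω)
        - ∫ ω', ∑ τ ∈ T, ∏ i ∈ τ, H i ω' / p i ω' ∂μ) ^ 2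
      = (∑ τ ∈ T, ∏ i ∈ τ, H i ω / p i ω) * (∑ τ' ∈ T, ∏ i ∈ τ', H i ω / p i ω)
        - (2 * (T.card : ℝ)) * (∑ τ ∈ T, ∏ i ∈ τ, H i ω / p i ω)
        + (T.card : ℝ) * T.card := by
    intro ω; rw [hm]; ring
  rw [integral_congr_ae (Filter.Eventually.of_forall hexp)]
  rw [integral_add (f := fun ω => (∑ τ ∈ T, ∏ i ∈ τ, H i ω / p i ω)
        * (∑ τ' ∈ T, ∏ i ∈ τ', H i ω / p i ω)
        - (2 * (T.card : ℝ)) * (∑ τ ∈ T, ∏ i ∈ τ, H i ω / p i ω))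
      (g := fun _ => (T.card : ℝ) * T.card)
      (by exact hIntN2.sub (hIntN.const_mul _)) (integrable_const _)]
  rw [integral_sub (by exact hIntN2) (by exact hIntN.const_mul _)]
  rw [integral_const_mul, hm, integral_const]
  have hN2 : ∫ ω, (∑ τ ∈ T, ∏ i ∈ τ, H i ω / p i ω)
      * (∑ τ' ∈ T, ∏ i ∈ τ', H i ω / p i ω) ∂μ
    = ∑ τ ∈ T, ∑ τ' ∈ T,
        ∫ ω, (∏ i ∈ τ, H i ω / p i ω) * (∏ i ∈ τ', H i ω / p i ω) ∂μ := by
    have : ∀ ω, (∑ τ ∈ T, ∏ i ∈ τ, H i ω / p i ω)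
        * (∑ τ' ∈ T, ∏ i ∈ τ', H i ω / p i ω)
      = ∑ τ ∈ T, ∑ τ' ∈ T,
          (∏ i ∈ τ, H i ω / p i ω) * (∏ i ∈ τ', H i ω / p i ω) := by
      intro ω; rw [Finset.sum_mul_sum]
    rw [integral_congr_ae (Filter.Eventually.of_forall this)]
    rw [integral_finset_sum T (fun τ hτ => integrable_finset_sum T
      (fun τ' hτ' => hIntProd2 τ τ' (hT1 τ hτ) (hT1 τ' hτ')))]
    exact Finset.sum_congr rfl fun τ hτ =>
      integral_finset_sum T (fun τ' hτ' => hIntProd2 τ τ' (hT1 τ hτ) (hT1 τ' hτ'))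
  rw [hN2]
  simp only [measure_univ, probReal_univ, ENNReal.toReal_one, smul_eq_mul, one_mul]
  ring
end
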